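/- arXiv:0809.2124 — 9 statements merged into one kernel-verified Lean document; each statement's English description precedes it below -/
import Mathlib

section
/- Let S be a set and M : S × S → ℂ a positive semidefinite function, i.e. ∑_{s∈S} ∑_{t∈S} conj(c_s) M(s,t) c_t ≥ 0 for every finitely supported family (c_s)_{s∈S} of complex numbers. Then there exist a complex Hilbert space H and a map X : S → H such that the closed linear span of {X(s) : s ∈ S} is all of H and M(s,t) = ⟨X(s), X(t)⟩_H for all s,t ∈ S. Moreover the pair (H, X) is unique up to unitary equivalence: if (H₁, X₁) and (H₂, X₂) both satisfy these conditions, then there is a unitary map W : H₁ → H₂ with W(X₁(s)) = X₂(s) for all s ∈ S. -/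
open scoped ComplexOrder

namespace PSR

open Finsupp

variable {S : Type} (M : S → S → ℂ)

noncomputable def B (c d : S →₀ ℂ) : ℂ :=
  ∑ s ∈ c.support, ∑ t ∈ d.support, (starRingEnd ℂ) (c s) * M s t * d t

lemma B_eq_sum (c d : S →₀ ℂ) {A A' : Finset S} (hA : c.support ⊆ A) (hA' : d.support ⊆ A') :
    B M c d = ∑ s ∈ A, ∑ t ∈ A', (starRingEnd ℂ) (c s) * M s t * d t := by
  unfold B
  have h1 : ∀ s, ∑ t ∈ d.support, (starRingEnd ℂ) (c s) * M s t * d t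
      = ∑ t ∈ A', (starRingEnd ℂ) (c s) * M s t * d t := fun s =>
    Finset.sum_subset hA' fun t _ ht => by simp [Finsupp.notMem_support_iff.mp ht]
  simp_rw [h1]
  exact Finset.sum_subset hA fun s _ hs => by simp [Finsupp.notMem_support_iff.mp hs]

variable (hpos : ∀ c : S →₀ ℂ, 0 ≤ B M c c)

include hpos in
lemma diag (s : S) : 0 ≤ M s s := by
  have h := hpos (Finsupp.single s 1)
  rwa [B_eq_sum M _ _ (Finsupp.support_single_subset) (Finsupp.support_single_subset),
    Finset.sum_singleton, Finset.sum_singleton, Finsupp.single_eq_same, map_one, one_mul,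
    mul_one] at h

include hpos in
lemma quad {s t : S} (hst : s ≠ t) (a b : ℂ) :
    0 ≤ (starRingEnd ℂ) a * M s s * a + (starRingEnd ℂ) a * M s t * b
      + (starRingEnd ℂ) b * M t s * a + (starRingEnd ℂ) b * M t t * b := by
  classical
  have h := hpos (Finsupp.single s a + Finsupp.single t b)
  have hsub : (Finsupp.single s a + Finsupp.single t b).support ⊆ ({s, t} : Finset S) :=
    Finsupp.support_add.trans (Finset.union_subset
      (Finsupp.support_single_subset.trans (by simp))
      (Finsupp.support_single_subset.trans (by simp)))
  rw [B_eq_sum M _ _ hsub hsub] at h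
  rw [Finset.sum_pair hst] at h
  rw [Finset.sum_pair hst, Finset.sum_pair hst] at h
  simpa [Finsupp.single_eq_of_ne hst, Finsupp.single_eq_of_ne hst.symm, add_assoc] using h

include hpos in
lemma herm (s t : S) : (starRingEnd ℂ) (M t s) = M s t := by
  have hds : (M s s).im = 0 := ((Complex.le_def.mp (diag M hpos s)).2).symm
  have hdt : (M t t).im = 0 := ((Complex.le_def.mp (diag M hpos t)).2).symm
  rcases eq_or_ne s t with rfl | hst
  · exact Complex.conj_eq_iff_im.mpr hds
  · have h1 := (Complex.le_def.mp (quad M hpos hst 1 1)).2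
    have h2 := (Complex.le_def.mp (quad M hpos hst 1 Complex.I)).2
    simp only [map_one, one_mul, mul_one, Complex.add_im, Complex.mul_im, Complex.mul_re,
      Complex.conj_im, Complex.conj_re, Complex.I_re, Complex.I_im, Complex.ext_iff,
      Complex.zero_im] at h1 h2 ⊢
    constructor <;> nlinarith [hds, hdt]

end PSR

namespace PSR
variable {S : Type} {M : S → S → ℂ} (hpos : ∀ c : S →₀ ℂ, 0 ≤ B M c c)

include hpos in
lemma B_conj_symm (x y : S →₀ ℂ) : (starRingEnd ℂ) (B M y x) = B M x y := by
  unfold B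
  rw [map_sum, Finset.sum_comm]
  refine Finset.sum_congr rfl fun s _ => ?_
  rw [map_sum]
  refine Finset.sum_congr rfl fun t _ => ?_
  simp only [map_mul, RingHomCompTriple.comp_apply, RingHom.id_apply, starRingEnd_self_apply]
  rw [herm M hpos t s]
  ring

lemma B_add_left (x y z : S →₀ ℂ) : B M (x + y) z = B M x z + B M y z := by
  classical
  rw [B_eq_sum M (x + y) z (Finsupp.support_add) subset_rfl,
    B_eq_sum M x z Finset.subset_union_left subset_rfl,
    B_eq_sum M y z Finset.subset_union_right subset_rfl, ← Finset.sum_add_distrib]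
  refine Finset.sum_congr rfl fun s _ => ?_
  rw [← Finset.sum_add_distrib]
  refine Finset.sum_congr rfl fun t _ => ?_
  simp only [Finsupp.add_apply, map_add]
  ring

lemma B_smul_left (x y : S →₀ ℂ) (r : ℂ) :
    B M (r • x) y = (starRingEnd ℂ) r * B M x y := by
  rw [B_eq_sum M (r • x) y (Finsupp.support_smul) subset_rfl, B, Finset.mul_sum]
  refine Finset.sum_congr rfl fun s _ => ?_
  rw [Finset.mul_sum]
  refine Finset.sum_congr rfl fun t _ => ?_
  simp only [Finsupp.smul_apply, smul_eq_mul, map_mul]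
  ring

variable (M) in
noncomputable def core (hpos : ∀ c : S →₀ ℂ, 0 ≤ B M c c) :
    PreInnerProductSpace.Core ℂ (S →₀ ℂ) where
  inner := B M
  conj_inner_symm := B_conj_symm hpos
  re_inner_nonneg := fun c => by
    simpa using (Complex.le_def.mp (hpos c)).1
  add_left := B_add_left
  smul_left := B_smul_left

end PSR

namespace PSR

lemma extend_isometry {E F : Type} [NormedAddCommGroup E] [NormedSpace ℂ E]
    [NormedAddCommGroup F] [NormedSpace ℂ F] [CompleteSpace F]
    (p : Submodule ℂ E) (hp : Dense (p : Set E)) (f : p →ₗᵢ[ℂ] F) :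
    ∃ g : E →ₗᵢ[ℂ] F, ∀ x : p, g x = f x := by
  have hiso : Isometry ((↑) : p → E) := isometry_subtype_coe
  have ue : IsUniformInducing ((↑) : p → E) := hiso.isUniformInducing
  have dr : DenseRange ((↑) : p → E) := by
    rwa [denseRange_iff_closure_range, Subtype.range_coe, ← dense_iff_closure_eq]
  have huc : UniformContinuous (⇑f) := f.isometry.uniformContinuous
  set g₀ : E → F := (ue.isDenseInducing dr).extend f with hg₀
  have heq : ∀ x : p, g₀ (x : E) = f x := fun x =>
    uniformly_extend_of_ind ue dr huc x
  have cont : Continuous g₀ :=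
    (uniformContinuous_uniformly_extend ue dr huc).continuous
  have hadd : ∀ x y : E, g₀ (x + y) = g₀ x + g₀ y := fun x y => by
    refine DenseRange.induction_on₂ dr ?_ (fun a b => ?_) x y
    · exact isClosed_eq (cont.comp continuous_add)
        ((cont.comp continuous_fst).add (cont.comp continuous_snd))
    · rw [← Submodule.coe_add, heq, heq, heq, map_add]
  have hsmul : ∀ (r : ℂ) (x : E), g₀ (r • x) = r • g₀ x := fun r x => by
    refine DenseRange.induction_on dr x ?_ (fun a => ?_)
    · exact isClosed_eq (cont.comp (continuous_const_smul r))
        ((cont).const_smul r)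
    · rw [← Submodule.coe_smul, heq, heq, map_smul]
  have hnorm : ∀ x : E, ‖g₀ x‖ = ‖x‖ := fun x => by
    refine DenseRange.induction_on dr x ?_ (fun a => ?_)
    · exact isClosed_eq (continuous_norm.comp cont) continuous_norm
    · rw [heq, f.norm_map, Submodule.norm_coe]
  refine ⟨⟨{ toFun := g₀, map_add' := hadd, map_smul' := hsmul }, hnorm⟩, heq⟩

end PSR

namespace PSR

lemma inner_linearCombination {S : Type} {H : Type} [NormedAddCommGroup H]
    [InnerProductSpace ℂ H] (X : S → H) (c d : S →₀ ℂ) :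
    (inner ℂ (Finsupp.linearCombination ℂ X c) (Finsupp.linearCombination ℂ X d) : ℂ) =
      ∑ s ∈ c.support, ∑ t ∈ d.support,
        (starRingEnd ℂ) (c s) * (inner ℂ (X s) (X t) : ℂ) * d t := by
  rw [Finsupp.linearCombination_apply, Finsupp.linearCombination_apply, Finsupp.sum, Finsupp.sum,
    sum_inner]
  refine Finset.sum_congr rfl fun s _ => ?_
  rw [inner_sum]
  refine Finset.sum_congr rfl fun t _ => ?_
  rw [inner_smul_left, inner_smul_right]
  ring

end PSR

open scoped ComplexOrder

/-- **Parthasarathy–Schmidt / Kolmogorov realization theorem.** A positive semidefinite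
function `M : S × S → ℂ` is realized as `M s t = ⟪X s, X t⟫` for a map `X : S → H`
into a complex Hilbert space `H` whose closed linear span of the range of `X` is all
of `H`; moreover the pair `(H, X)` is unique up to unitary equivalence. -/
theorem parthasarathy_schmidt_realization {S : Type} (M : S → S → ℂ)
    (hpos : ∀ c : S →₀ ℂ,
      0 ≤ ∑ s ∈ c.support, ∑ t ∈ c.support, (starRingEnd ℂ) (c s) * M s t * c t) :
    (∃ (H : Type) (_ : NormedAddCommGroup H) (_ : InnerProductSpace ℂ H)
        (_ : CompleteSpace H) (X : S → H),
        (Submodule.span ℂ (Set.range X)).topologicalClosure = ⊤ ∧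
        ∀ s t, M s t = (inner ℂ (X s) (X t) : ℂ)) ∧
    (∀ (H₁ : Type) (_ : NormedAddCommGroup H₁) (_ : InnerProductSpace ℂ H₁)
        (_ : CompleteSpace H₁) (X₁ : S → H₁)
        (H₂ : Type) (_ : NormedAddCommGroup H₂) (_ : InnerProductSpace ℂ H₂)
        (_ : CompleteSpace H₂) (X₂ : S → H₂),
        (Submodule.span ℂ (Set.range X₁)).topologicalClosure = ⊤ →
        (∀ s t, M s t = (inner ℂ (X₁ s) (X₁ t) : ℂ)) →
        (Submodule.span ℂ (Set.range X₂)).topologicalClosure = ⊤ →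
        (∀ s t, M s t = (inner ℂ (X₂ s) (X₂ t) : ℂ)) →
        ∃ W : H₁ ≃ₗᵢ[ℂ] H₂, ∀ s, W (X₁ s) = X₂ s) := by
  classical
  have hpos' : ∀ c : S →₀ ℂ, 0 ≤ PSR.B M c c := hpos
  constructor
  · -- Existence
    letI core := PSR.core M hpos'
    letI : SeminormedAddCommGroup (S →₀ ℂ) :=
      InnerProductSpace.Core.toSeminormedAddCommGroup (𝕜 := ℂ) (F := S →₀ ℂ)
    letI : NormedSpace ℂ (S →₀ ℂ) := InnerProductSpace.Core.toNormedSpace (𝕜 := ℂ) (F := S →₀ ℂ)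
    letI : InnerProductSpace ℂ (S →₀ ℂ) :=
      { (inferInstance : NormedSpace ℂ (S →₀ ℂ)) with
        inner := PSR.B M
        norm_sq_eq_re_inner := fun x => by
          have h₁ : ‖x‖ ^ 2 = Real.sqrt (RCLike.re (core.inner x x)) ^ 2 := rfl
          have h₂ : 0 ≤ RCLike.re (core.inner x x) := core.re_inner_nonneg x
          rw [h₁]
          exact Real.sq_sqrt h₂
        conj_inner_symm := core.conj_inner_symm
        add_left := core.add_left
        smul_left := PSR.B_smul_left }
    refine ⟨UniformSpace.Completion (S →₀ ℂ), inferInstance, inferInstance, inferInstance,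
      fun s => ((Finsupp.single s 1 : S →₀ ℂ) : UniformSpace.Completion (S →₀ ℂ)), ?_, ?_⟩
    · rw [← Submodule.dense_iff_topologicalClosure_eq_top]
      have hsub : Set.range ((↑) : (S →₀ ℂ) → UniformSpace.Completion (S →₀ ℂ)) ⊆
          (Submodule.span ℂ (Set.range fun s =>
            ((Finsupp.single s 1 : S →₀ ℂ) : UniformSpace.Completion (S →₀ ℂ))) : Set _) := by
        rintro _ ⟨c, rfl⟩
        have hc : ∑ s ∈ c.support, (c s) • (Finsupp.single s 1 : S →₀ ℂ) = c := by
          conv_rhs => rw [← Finsupp.sum_single c]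
          rw [Finsupp.sum]
          exact Finset.sum_congr rfl fun s _ => by
            rw [Finsupp.smul_single, smul_eq_mul, mul_one]
        have hlin : (UniformSpace.Completion.toComplₗᵢ (𝕜 := ℂ)) c =
            ∑ s ∈ c.support,
              c s • ((Finsupp.single s 1 : S →₀ ℂ) : UniformSpace.Completion (S →₀ ℂ)) := by
          conv_lhs => rw [← hc]
          rw [map_sum]
          exact Finset.sum_congr rfl fun s _ => by
            rw [LinearIsometry.map_smul]
            rfl
        rw [show ((c : UniformSpace.Completion (S →₀ ℂ)))
          = (UniformSpace.Completion.toComplₗᵢ (𝕜 := ℂ)) c from rfl, hlin]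
        exact Submodule.sum_mem _ fun s _ => Submodule.smul_mem _ _
          (Submodule.subset_span ⟨s, rfl⟩)
      exact (UniformSpace.Completion.denseRange_coe).mono hsub
    · intro s t
      rw [UniformSpace.Completion.inner_coe]
      show M s t = PSR.B M (Finsupp.single s 1) (Finsupp.single t 1)
      rw [PSR.B_eq_sum M _ _ Finsupp.support_single_subset Finsupp.support_single_subset,
        Finset.sum_singleton, Finset.sum_singleton, Finsupp.single_eq_same,
        Finsupp.single_eq_same, map_one, one_mul, mul_one]
  · -- Uniqueness
    intro H₁ i₁ ip₁ c₁ X₁ H₂ i₂ ip₂ c₂ X₂ hd₁ h₁ hd₂ h₂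
    set T₁ := Finsupp.linearCombination ℂ X₁ with hT₁
    set T₂ := Finsupp.linearCombination ℂ X₂ with hT₂
    have key : ∀ c d : S →₀ ℂ,
        (inner ℂ (T₁ c) (T₁ d) : ℂ) = (inner ℂ (T₂ c) (T₂ d) : ℂ) := by
      intro c d
      rw [hT₁, hT₂, PSR.inner_linearCombination, PSR.inner_linearCombination]
      exact Finset.sum_congr rfl fun s _ => Finset.sum_congr rfl fun t _ => by
        rw [← h₁, ← h₂]
    have hker : LinearMap.ker T₁ = LinearMap.ker T₂ := by
      ext c
      simp only [LinearMap.mem_ker]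
      rw [← @inner_self_eq_zero ℂ _ _ _ _ (T₁ c), ← @inner_self_eq_zero ℂ _ _ _ _ (T₂ c), key]
    let e₁ := T₁.quotKerEquivRange
    let e₂ := T₂.quotKerEquivRange
    let q := Submodule.quotEquivOfEq _ _ hker
    let E0 : LinearMap.range T₁ ≃ₗ[ℂ] LinearMap.range T₂ := (e₁.symm.trans q).trans e₂
    have hE0 : ∀ (c : S →₀ ℂ) (h : T₁ c ∈ LinearMap.range T₁),
        (E0 ⟨T₁ c, h⟩ : H₂) = T₂ c := by
      intro c h
      show (e₂ (q (e₁.symm ⟨T₁ c, h⟩)) : H₂) = T₂ c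
      rw [LinearMap.quotKerEquivRange_symm_apply_image, Submodule.mkQ_apply,
        Submodule.quotEquivOfEq_mk, LinearMap.quotKerEquivRange_apply_mk]
    have hinner : ∀ x y : LinearMap.range T₁, (inner ℂ (E0 x) (E0 y) : ℂ) = inner ℂ x y := by
      rintro ⟨x, hx⟩ ⟨y, hy⟩
      obtain ⟨c, rfl⟩ := hx
      obtain ⟨d, rfl⟩ := hy
      rw [Submodule.coe_inner, Submodule.coe_inner]
      exact (congrArg₂ (inner ℂ) (hE0 c _) (hE0 d _)).trans (key c d).symm
    let f := E0.isometryOfInner hinner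
    have hdense₁ : Dense ((LinearMap.range T₁ : Submodule ℂ H₁) : Set H₁) := by
      rw [hT₁, Finsupp.range_linearCombination]
      exact Submodule.dense_iff_topologicalClosure_eq_top.mpr hd₁
    have hdense₂ : Dense ((LinearMap.range T₂ : Submodule ℂ H₂) : Set H₂) := by
      rw [hT₂, Finsupp.range_linearCombination]
      exact Submodule.dense_iff_topologicalClosure_eq_top.mpr hd₂
    obtain ⟨g, hg⟩ := PSR.extend_isometry (LinearMap.range T₁) hdense₁
      ((LinearMap.range T₂).subtypeₗᵢ.comp f.toLinearIsometry)
    obtain ⟨g', hg'⟩ := PSR.extend_isometry (LinearMap.range T₂) hdense₂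
      ((LinearMap.range T₁).subtypeₗᵢ.comp f.symm.toLinearIsometry)
    have hgf : ∀ a : LinearMap.range T₁, g a = ((f a : LinearMap.range T₂) : H₂) := fun a => hg a
    have hgf' : ∀ b : LinearMap.range T₂, g' b = ((f.symm b : LinearMap.range T₁) : H₁) :=
      fun b => hg' b
    have hgg : ∀ x : H₁, g' (g x) = x := by
      intro x
      refine DenseRange.induction_on hdense₁.denseRange_val x ?_ (fun a => ?_)
      · exact isClosed_eq (g'.continuous.comp g.continuous) continuous_id
      · rw [hgf a, hgf' (f a)]
        simp
    have hgg' : ∀ y : H₂, g (g' y) = y := by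
      intro y
      refine DenseRange.induction_on hdense₂.denseRange_val y ?_ (fun b => ?_)
      · exact isClosed_eq (g.continuous.comp g'.continuous) continuous_id
      · rw [hgf' b, hgf (f.symm b)]
        simp
    let Weq : H₁ ≃ₗ[ℂ] H₂ := LinearEquiv.ofLinear g.toLinearMap g'.toLinearMap
      (LinearMap.ext fun y => hgg' y) (LinearMap.ext fun x => hgg x)
    refine ⟨⟨Weq, fun x => g.norm_map x⟩, ?_⟩
    intro s
    have h1s : T₁ (Finsupp.single s 1) = X₁ s := by
      rw [hT₁, Finsupp.linearCombination_single, one_smul]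
    have h2s : T₂ (Finsupp.single s 1) = X₂ s := by
      rw [hT₂, Finsupp.linearCombination_single, one_smul]
    show g (X₁ s) = X₂ s
    rw [← h1s, ← h2s]
    rw [show T₁ (Finsupp.single s 1) = ((⟨T₁ (Finsupp.single s 1),
      LinearMap.mem_range_self _ _⟩ : LinearMap.range T₁) : H₁) from rfl, hgf]
    show (E0 ⟨T₁ (Finsupp.single s 1), _⟩ : H₂) = _
    rw [hE0]
end

section
/- Let (τ_i)_{i∈I} be a finite family of contractive maps on ℝ (each τ_i is Lipschitz with Lipschitz constant r_i < 1) and let (p_i)_{i∈I} be strictly positive weights with ∑_{i∈I} p_i = 1. Let μ be the Hutchinson equilibrium measure, i.e. the Borel probability measure with compact support satisfying μ = ∑_{i∈I} p_i · (μ ∘ τ_i⁻¹). If ν is any Borel probability measure on ℝ whose support is contained in the support of μ and whose moment matrix is a fixed point of the moment transformation, i.e. ∫_ℝ x^n dν(x) = ∑_{i∈I} p_i ∫_ℝ (τ_i(x))^n dν(x) for all n ∈ ℕ, then ν = μ. -/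
open MeasureTheory Metric Filter Topology

private lemma aux_integrable {ρ : Measure ℝ} [IsFiniteMeasure ρ] {K : Set ℝ} (hK : IsCompact K)
    (h0 : ρ Kᶜ = 0) {g : ℝ → ℝ} (hg : Continuous g) : Integrable g ρ := by
  obtain ⟨M, hM⟩ := (hK.image hg).isBounded.subset_closedBall 0
  have hae : ∀ᵐ x ∂ρ, x ∈ K := by
    rw [MeasureTheory.ae_iff]
    simpa [Set.compl_def] using h0
  refine (integrable_const M).mono' hg.aestronglyMeasurable ?_
  filter_upwards [hae] with x hx
  simpa [Real.norm_eq_abs] using mem_closedBall_zero_iff.mp (hM (Set.mem_image_of_mem g hx))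

/-- **Uniqueness of the moment fixed point for a contractive IFS.** Let `(τ i)` be a
finite family of contractive maps on `ℝ` with probability weights `p i > 0`,
`∑ p i = 1`, and let `μ` be the Hutchinson equilibrium measure (the compactly
supported Borel probability measure with `μ = ∑ i, p i • (μ ∘ τ i⁻¹)`).  If `ν` is a
Borel probability measure whose support is contained in the support of `μ` and whose
moment matrix is a fixed point of the moment transformation, then `ν = μ`. -/
theorem ifs_moment_fixed_point_unique {I : Type} [Fintype I]
    (τ : I → ℝ → ℝ) (r : I → NNReal) (hr : ∀ i, r i < 1)
    (hlip : ∀ i, LipschitzWith (r i) (τ i))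
    (p : I → ℝ) (hp : ∀ i, 0 < p i) (hpsum : ∑ i, p i = 1)
    (μ : Measure ℝ) [IsProbabilityMeasure μ]
    (hμcompact : ∃ K : Set ℝ, IsCompact K ∧ μ Kᶜ = 0)
    (hμfix : μ = ∑ i, ENNReal.ofReal (p i) • μ.map (τ i))
    (ν : Measure ℝ) [IsProbabilityMeasure ν]
    (hsupp : ∀ U : Set ℝ, IsOpen U → μ U = 0 → ν U = 0)
    (hνmom : ∀ n : ℕ, ∫ x, x ^ n ∂ν = ∑ i, p i * ∫ x, (τ i x) ^ n ∂ν) :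
    ν = μ := by
  obtain ⟨K, hKc, hμK⟩ := hμcompact
  have hνK : ν Kᶜ = 0 := hsupp _ hKc.isClosed.isOpen_compl hμK
  have haeν : ∀ᵐ x ∂ν, x ∈ K := by rw [MeasureTheory.ae_iff]; simpa [Set.compl_def] using hνK
  have haeμ : ∀ᵐ x ∂μ, x ∈ K := by rw [MeasureTheory.ae_iff]; simpa [Set.compl_def] using hμK
  have intν : ∀ g : ℝ → ℝ, Continuous g → Integrable g ν := fun g hg => aux_integrable hKc hνK hg
  have intμ : ∀ g : ℝ → ℝ, Continuous g → Integrable g μ := fun g hg => aux_integrable hKc hμK hg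
  -- bounding radius
  have hScomp : IsCompact (K ∪ ⋃ i, τ i '' K) :=
    hKc.union (isCompact_iUnion (fun i => hKc.image (hlip i).continuous))
  obtain ⟨R₀, hR₀⟩ := hScomp.isBounded.subset_closedBall 0
  set R : ℝ := max R₀ 0 with hRdef
  have hR : K ∪ ⋃ i, τ i '' K ⊆ closedBall 0 R :=
    hR₀.trans (closedBall_subset_closedBall (le_max_left _ _))
  have hR0 : 0 ≤ R := le_max_right _ _
  have hKR : ∀ x ∈ K, |x| ≤ R := by
    intro x hx
    simpa [Real.norm_eq_abs] using mem_closedBall_zero_iff.mp (hR (Set.mem_union_left _ hx))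
  have hτR : ∀ i, ∀ x ∈ K, |τ i x| ≤ R := by
    intro i x hx
    have hmem : τ i x ∈ K ∪ ⋃ j, τ j '' K :=
      Set.mem_union_right _ (Set.mem_iUnion.mpr ⟨i, Set.mem_image_of_mem _ hx⟩)
    simpa [Real.norm_eq_abs] using mem_closedBall_zero_iff.mp (hR hmem)
  have hKIcc : ∀ x ∈ K, x ∈ Set.Icc (-R) R := fun x hx => abs_le.mp (hKR x hx)
  have hτIcc : ∀ i, ∀ x ∈ K, τ i x ∈ Set.Icc (-R) R := fun i x hx => abs_le.mp (hτR i x hx)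
  -- Weierstrass approximation on [-R, R]
  have weier : ∀ g : ℝ → ℝ, Continuous g → ∀ ε > (0:ℝ), ∃ q : Polynomial ℝ,
      ∀ x ∈ Set.Icc (-R) R, |g x - q.eval x| ≤ ε := by
    intro g hg ε hε
    obtain ⟨q, hq⟩ := exists_polynomial_near_continuousMap (-R) R
      ((ContinuousMap.mk g hg).restrict (Set.Icc (-R) R)) ε hε
    refine ⟨q, fun x hx => ?_⟩
    have h1 := ContinuousMap.norm_coe_le_norm
      (q.toContinuousMapOn (Set.Icc (-R) R) - (ContinuousMap.mk g hg).restrict (Set.Icc (-R) R))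
      ⟨x, hx⟩
    rw [abs_sub_comm]
    calc |q.eval x - g x| ≤ _ := by simpa [Real.norm_eq_abs] using h1
      _ ≤ ε := hq.le
  -- polynomial moments identity
  have hpoly : ∀ q : Polynomial ℝ, ∫ x, q.eval x ∂ν = ∑ i, p i * ∫ x, q.eval (τ i x) ∂ν := by
    intro q
    induction q using Polynomial.induction_on' with
    | add q₁ q₂ h₁ h₂ =>
      simp only [Polynomial.eval_add]
      rw [integral_add (intν _ q₁.continuous) (intν _ q₂.continuous), h₁, h₂,
        ← Finset.sum_add_distrib]
      refine Finset.sum_congr rfl fun i _ => ?_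
      rw [integral_add (intν (fun x => q₁.eval (τ i x)) (q₁.continuous.comp (hlip i).continuous))
        (intν (fun x => q₂.eval (τ i x)) (q₂.continuous.comp (hlip i).continuous)), mul_add]
    | monomial n a =>
      simp only [Polynomial.eval_monomial]
      rw [integral_const_mul, hνmom n, Finset.mul_sum]
      refine Finset.sum_congr rfl fun i _ => ?_
      rw [integral_const_mul]; ring
  -- the ν-integral of any continuous function is a fixed point of the transfer operator
  have hfixν : ∀ g : ℝ → ℝ, Continuous g → ∫ x, g x ∂ν = ∑ i, p i * ∫ x, g (τ i x) ∂ν := by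
    intro g hg
    have key : ∀ ε > (0:ℝ),
        |∫ x, g x ∂ν - ∑ i, p i * ∫ x, g (τ i x) ∂ν| ≤ 2 * ε := by
      intro ε hε
      obtain ⟨q, hq⟩ := weier g hg ε hε
      have h1 : |∫ x, g x ∂ν - ∫ x, q.eval x ∂ν| ≤ ε := by
        rw [← integral_sub (intν g hg) (intν _ q.continuous)]
        have hb : ∀ᵐ x ∂ν, ‖g x - q.eval x‖ ≤ ε := by
          filter_upwards [haeν] with x hx
          simpa [Real.norm_eq_abs] using hq x (hKIcc x hx)
        simpa [measure_univ] using norm_integral_le_of_norm_le (integrable_const ε) hb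
      have h2 : ∀ i, |∫ x, g (τ i x) ∂ν - ∫ x, q.eval (τ i x) ∂ν| ≤ ε := by
        intro i
        rw [← integral_sub (intν (fun x => g (τ i x)) (hg.comp (hlip i).continuous))
          (intν (fun x => q.eval (τ i x)) (q.continuous.comp (hlip i).continuous))]
        have hb : ∀ᵐ x ∂ν, ‖g (τ i x) - q.eval (τ i x)‖ ≤ ε := by
          filter_upwards [haeν] with x hx
          simpa [Real.norm_eq_abs] using hq (τ i x) (hτIcc i x hx)
        simpa [measure_univ] using norm_integral_le_of_norm_le (integrable_const ε) hb
      calc |∫ x, g x ∂ν - ∑ i, p i * ∫ x, g (τ i x) ∂ν|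
          = |(∫ x, g x ∂ν - ∫ x, q.eval x ∂ν) +
              ∑ i, p i * (∫ x, q.eval (τ i x) ∂ν - ∫ x, g (τ i x) ∂ν)| := by
            have hsplit : ∑ i, p i * (∫ x, q.eval (τ i x) ∂ν - ∫ x, g (τ i x) ∂ν)
                = (∑ i, p i * ∫ x, q.eval (τ i x) ∂ν) - ∑ i, p i * ∫ x, g (τ i x) ∂ν := by
              rw [← Finset.sum_sub_distrib]
              exact Finset.sum_congr rfl fun i _ => by ring
            rw [hsplit, ← hpoly q]
            congr 1
            ring
        _ ≤ |∫ x, g x ∂ν - ∫ x, q.eval x ∂ν| +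
              |∑ i, p i * (∫ x, q.eval (τ i x) ∂ν - ∫ x, g (τ i x) ∂ν)| := abs_add_le _ _
        _ ≤ ε + ∑ i, p i * ε := by
            refine add_le_add h1 ?_
            refine (Finset.abs_sum_le_sum_abs _ _).trans (Finset.sum_le_sum fun i _ => ?_)
            rw [abs_mul, abs_of_pos (hp i), abs_sub_comm]
            exact mul_le_mul_of_nonneg_left (h2 i) (hp i).le
        _ = 2 * ε := by rw [← Finset.sum_mul, hpsum]; ring
    by_contra hne
    have h3 : 0 < |∫ x, g x ∂ν - ∑ i, p i * ∫ x, g (τ i x) ∂ν| :=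
      abs_pos.mpr (sub_ne_zero.mpr hne)
    have := key (|∫ x, g x ∂ν - ∑ i, p i * ∫ x, g (τ i x) ∂ν| / 4) (by positivity)
    linarith
  -- same fixed-point identity for μ, directly from hμfix
  have hfixμ : ∀ g : ℝ → ℝ, Continuous g → ∫ x, g x ∂μ = ∑ i, p i * ∫ x, g (τ i x) ∂μ := by
    intro g hg
    have hint : ∀ i : I, Integrable g (ENNReal.ofReal (p i) • μ.map (τ i)) := by
      intro i
      refine Integrable.smul_measure ?_ ENNReal.ofReal_ne_top
      rw [integrable_map_measure hg.aestronglyMeasurable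
        (hlip i).continuous.measurable.aemeasurable]
      exact intμ _ (hg.comp (hlip i).continuous)
    calc ∫ x, g x ∂μ = ∫ x, g x ∂(∑ i, ENNReal.ofReal (p i) • μ.map (τ i)) := by rw [← hμfix]
      _ = ∑ i, ∫ x, g x ∂(ENNReal.ofReal (p i) • μ.map (τ i)) :=
          integral_finset_sum_measure (fun i _ => hint i)
      _ = ∑ i, p i * ∫ x, g (τ i x) ∂μ := by
          refine Finset.sum_congr rfl fun i _ => ?_
          rw [integral_smul_measure,
            integral_map (hlip i).continuous.measurable.aemeasurable hg.aestronglyMeasurable]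
          simp [ENNReal.toReal_ofReal (hp i).le, smul_eq_mul]
  -- contraction constant
  set c : NNReal := Finset.univ.sup r with hcdef
  have hc1 : (c : ℝ) < 1 := by
    have : c < 1 := (Finset.sup_lt_iff (by norm_num : (⊥ : NNReal) < 1)).mpr fun i _ => hr i
    exact_mod_cast this
  have hci : ∀ i, (r i : ℝ) ≤ c := fun i => by
    exact_mod_cast Finset.le_sup (f := r) (Finset.mem_univ i)
  have hcnn : (0:ℝ) ≤ c := c.coe_nonneg
  -- the main contraction estimate
  have main : ∀ n : ℕ, ∀ (L : NNReal) (f : ℝ → ℝ), LipschitzWith L f →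
      |∫ x, f x ∂ν - ∫ x, f x ∂μ| ≤ 2 * L * R * (c : ℝ) ^ n := by
    intro n
    induction n with
    | zero =>
      intro L f hf
      have base : ∀ ρ : Measure ℝ, IsProbabilityMeasure ρ → (∀ᵐ x ∂ρ, x ∈ K) →
          Integrable f ρ → |∫ x, f x ∂ρ - f 0| ≤ L * R := by
        intro ρ hρ hae hint
        have : ∫ x, f x ∂ρ - f 0 = ∫ x, (f x - f 0) ∂ρ := by
          rw [integral_sub hint (integrable_const _), integral_const]
          simp [measure_univ]
        rw [this]
        have hb : ∀ᵐ x ∂ρ, ‖f x - f 0‖ ≤ L * R := by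
          filter_upwards [hae] with x hx
          have h1 : dist (f x) (f 0) ≤ L * dist x 0 := hf.dist_le_mul x 0
          have h2 : dist x 0 ≤ R := by simpa [Real.dist_eq] using hKR x hx
          calc ‖f x - f 0‖ = dist (f x) (f 0) := by rw [dist_eq_norm]
            _ ≤ L * dist x 0 := h1
            _ ≤ L * R := mul_le_mul_of_nonneg_left h2 L.coe_nonneg
        simpa [measure_univ] using norm_integral_le_of_norm_le (integrable_const ((L:ℝ) * R)) hb
      have h1 := base ν inferInstance haeν (intν f hf.continuous)
      have h2 := base μ inferInstance haeμ (intμ f hf.continuous)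
      calc |∫ x, f x ∂ν - ∫ x, f x ∂μ|
          = |(∫ x, f x ∂ν - f 0) - (∫ x, f x ∂μ - f 0)| := by ring_nf
        _ ≤ |∫ x, f x ∂ν - f 0| + |∫ x, f x ∂μ - f 0| := abs_sub _ _
        _ ≤ L * R + L * R := add_le_add h1 h2
        _ = 2 * L * R * (c : ℝ) ^ 0 := by ring
    | succ n ih =>
      intro L f hf
      rw [hfixν f hf.continuous, hfixμ f hf.continuous, ← Finset.sum_sub_distrib]
      have hterm : ∀ i ∈ Finset.univ, |p i * ∫ x, f (τ i x) ∂ν - p i * ∫ x, f (τ i x) ∂μ|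
          ≤ p i * (2 * L * R * (c : ℝ) ^ n * c) := by
        intro i _
        have hfi : LipschitzWith (L * r i) (f ∘ τ i) := hf.comp (hlip i)
        have := ih (L * r i) (f ∘ τ i) hfi
        rw [← mul_sub, abs_mul, abs_of_pos (hp i)]
        refine mul_le_mul_of_nonneg_left ?_ (hp i).le
        calc |∫ x, (f ∘ τ i) x ∂ν - ∫ x, (f ∘ τ i) x ∂μ| ≤ 2 * (L * r i : NNReal) * R * (c:ℝ)^n := this
          _ = 2 * ((L:ℝ) * (r i : ℝ)) * R * (c:ℝ)^n := by push_cast; ring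
          _ ≤ 2 * ((L:ℝ) * (c:ℝ)) * R * (c:ℝ)^n := by
              have h3 : (0:ℝ) ≤ 2 * (L:ℝ) * R * (c:ℝ)^n := by positivity
              nlinarith [mul_le_mul_of_nonneg_left (hci i) h3]
          _ = 2 * L * R * (c:ℝ)^n * c := by ring
      calc |∑ i, (p i * ∫ x, f (τ i x) ∂ν - p i * ∫ x, f (τ i x) ∂μ)|
          ≤ ∑ i, |p i * ∫ x, f (τ i x) ∂ν - p i * ∫ x, f (τ i x) ∂μ| :=
            Finset.abs_sum_le_sum_abs _ _
        _ ≤ ∑ i, p i * (2 * L * R * (c : ℝ) ^ n * c) := Finset.sum_le_sum hterm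
        _ = 2 * L * R * (c : ℝ) ^ (n+1) := by
            rw [← Finset.sum_mul, hpsum, pow_succ]; ring
  -- integrals of Lipschitz functions agree
  have heq : ∀ (L : NNReal) (f : ℝ → ℝ), LipschitzWith L f → ∫ x, f x ∂ν = ∫ x, f x ∂μ := by
    intro L f hf
    have h0 : Tendsto (fun n : ℕ => 2 * (L:ℝ) * R * (c:ℝ) ^ n) atTop (𝓝 0) := by
      simpa using (tendsto_pow_atTop_nhds_zero_of_lt_one hcnn hc1).const_mul (2 * (L:ℝ) * R)
    have hle : |∫ x, f x ∂ν - ∫ x, f x ∂μ| ≤ 0 :=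
      ge_of_tendsto' h0 (fun n => main n L f hf)
    have := abs_nonpos_iff.mp hle
    linarith [sub_eq_zero.mp this]
  -- measures agree on closed sets
  have hclosed : ∀ F : Set ℝ, IsClosed F → ν F = μ F := by
    intro F hF
    rcases F.eq_empty_or_nonempty with rfl | hFne
    · simp
    set f : ℕ → ℝ → ℝ := fun k x => max (1 - (k:ℝ) * infDist x F) 0 with hfdef
    have hflip : ∀ k : ℕ, LipschitzWith (‖(k:ℝ)‖₊ * 1 + 0) (f k) := by
      intro k
      have h1 : LipschitzWith (‖(k:ℝ)‖₊ * 1) (fun x : ℝ => (k:ℝ) * infDist x F) :=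
        (lipschitzWith_smul ((k:ℝ))).comp (lipschitz_infDist_pt F)
      have h2 : LipschitzWith (0 + ‖(k:ℝ)‖₊ * 1) (fun x : ℝ => 1 - (k:ℝ) * infDist x F) :=
        (LipschitzWith.const 1).sub h1
      rw [add_comm] at h2
      exact h2.max_const 0
    have hfbd : ∀ k x, ‖f k x‖ ≤ 1 := by
      intro k x
      rw [Real.norm_eq_abs, abs_le]
      constructor
      · linarith [le_max_right (1 - (k:ℝ) * infDist x F) 0]
      · have hk : (0:ℝ) ≤ (k:ℝ) * infDist x F :=
          mul_nonneg (Nat.cast_nonneg k) infDist_nonneg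
        exact max_le (by linarith) zero_le_one
    have hlim : ∀ x, Tendsto (fun k => f k x) atTop (𝓝 (F.indicator (fun _ => (1:ℝ)) x)) := by
      intro x
      by_cases hx : x ∈ F
      · simp only [hfdef, infDist_zero_of_mem hx, Set.indicator_of_mem hx, mul_zero, sub_zero]
        simp
      · have hd : 0 < infDist x F := (hF.notMem_iff_infDist_pos hFne).mp hx
        rw [Set.indicator_of_notMem hx]
        obtain ⟨N, hN⟩ := exists_nat_ge (1 / infDist x F)
        refine tendsto_atTop_of_eventually_const (i₀ := N) fun k hk => ?_
        have h1 : 1 / infDist x F ≤ (k:ℝ) := hN.trans (by exact_mod_cast hk)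
        have h2 : (1:ℝ) ≤ (k:ℝ) * infDist x F := by
          rw [div_le_iff₀ hd] at h1
          linarith
        simp only [hfdef]
        exact max_eq_right (by linarith)
    have hdct : ∀ ρ : Measure ℝ, IsProbabilityMeasure ρ →
        Tendsto (fun k => ∫ x, f k x ∂ρ) atTop (𝓝 ((ρ F).toReal)) := by
      intro ρ hρ
      have := tendsto_integral_of_dominated_convergence (μ := ρ)
        (F := f) (f := F.indicator (fun _ => (1:ℝ))) (bound := fun _ => (1:ℝ))
        (fun k => ((hflip k).continuous).aestronglyMeasurable)
        (integrable_const 1)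
        (fun k => Eventually.of_forall (fun x => hfbd k x))
        (Eventually.of_forall hlim)
      have hind : ∫ x, F.indicator (fun _ => (1:ℝ)) x ∂ρ = (ρ F).toReal := by
        rw [integral_indicator_const _ hF.measurableSet]
        simp
        rfl
      rwa [hind] at this
    have hteq : (ν F).toReal = (μ F).toReal := by
      have h1 := hdct ν inferInstance
      have h2 := hdct μ inferInstance
      have h3 : (fun k => ∫ x, f k x ∂ν) = fun k => ∫ x, f k x ∂μ :=
        funext fun k => heq _ _ (hflip k)
      rw [h3] at h1
      exact tendsto_nhds_unique h1 h2
    exact (ENNReal.toReal_eq_toReal_iff' (measure_ne_top ν F) (measure_ne_top μ F)).mp hteq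
  -- conclude by the π-system of closed sets
  refine MeasureTheory.ext_of_generate_finite {s : Set ℝ | IsClosed s} ?_ ?_
    (fun s hs => hclosed s hs) (by simp [measure_univ])
  · borelize ℝ
    exact borel_eq_generateFrom_isClosed
  · intro s hs t ht _
    exact hs.inter ht
end

section
/- Let (τ_i)_{i∈I} be a finite family of affine maps τ_i(x) = c_i·x + b_i on ℝ with |c_i| < 1, let (p_i)_{i∈I} be weights with p_i ∈ (0,1) and ∑_{i∈I} p_i = 1, and let μ be a Borel probability measure on ℝ with compact support satisfying μ = ∑_{i∈I} p_i (μ ∘ τ_i⁻¹). Then the moment matrix M^{(μ)} is a fixed point of the transformation M ↦ ∑_i p_i A_i* M A_i; explicitly, for all m, n ∈ ℕ: ∫_ℝ x^{m+n} dμ(x) = ∑_{i∈I} p_i ∑_{j=0}^{m} ∑_{ℓ=0}^{n} binom(m,j) · binom(n,ℓ) · b_i^{m+n−j−ℓ} · c_i^{j+ℓ} · ∫_ℝ x^{j+ℓ} dμ(x). -/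
open MeasureTheory

/-- **The moment matrix of the equilibrium measure of an affine IFS is a fixed point
of the transformation `M ↦ ∑ i, p i • Aᵢ* M Aᵢ`**, written out entrywise. -/
theorem affine_ifs_moment_fixed_point {I : Type} [Fintype I]
    (b c : I → ℝ) (hc : ∀ i, |c i| < 1)
    (p : I → ℝ) (hp : ∀ i, p i ∈ Set.Ioo (0 : ℝ) 1) (hpsum : ∑ i, p i = 1)
    (μ : Measure ℝ) [IsProbabilityMeasure μ]
    (hμcompact : ∃ K : Set ℝ, IsCompact K ∧ μ Kᶜ = 0)
    (hμfix : μ = ∑ i, ENNReal.ofReal (p i) • μ.map (fun x => c i * x + b i)) :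
    ∀ m n : ℕ,
      ∫ x, x ^ (m + n) ∂μ =
      ∑ i, p i * ∑ j ∈ Finset.range (m + 1), ∑ l ∈ Finset.range (n + 1),
        (m.choose j : ℝ) * (n.choose l : ℝ) * b i ^ (m + n - j - l) * c i ^ (j + l) *
        ∫ x, x ^ (j + l) ∂μ := by
  obtain ⟨K, hK, hKc⟩ := hμcompact
  have haeK : ∀ᵐ x ∂μ, x ∈ K := by
    rw [MeasureTheory.ae_iff]
    exact hKc
  have hint : ∀ g : ℝ → ℝ, Continuous g → Integrable g μ := by
    intro g hg
    obtain ⟨C, hC⟩ := hK.exists_bound_of_continuousOn hg.continuousOn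
    exact (integrable_const C).mono' hg.aestronglyMeasurable
      (haeK.mono fun x hx => hC x hx)
  intro m n
  have hmeas : ∀ i, Measurable fun x : ℝ => c i * x + b i := fun i =>
    (measurable_id.const_mul _).add_const _
  have hcont : ∀ i, Continuous fun x : ℝ => (c i * x + b i) ^ (m + n) := fun i =>
    ((continuous_const.mul continuous_id).add continuous_const).pow _
  have key : ∀ i, ∀ x : ℝ, (c i * x + b i) ^ (m + n) =
      ∑ j ∈ Finset.range (m + 1), ∑ l ∈ Finset.range (n + 1),
        (m.choose j : ℝ) * (n.choose l : ℝ) * b i ^ (m + n - j - l) * c i ^ (j + l) *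
          x ^ (j + l) := by
    intro i x
    rw [pow_add, add_pow, add_pow, Finset.sum_mul_sum]
    refine Finset.sum_congr rfl fun j hj => Finset.sum_congr rfl fun l hl => ?_
    simp only [Finset.mem_range] at hj hl
    have h1 : m + n - j - l = (m - j) + (n - l) := by omega
    rw [h1, pow_add, mul_pow, pow_add, pow_add, mul_pow]
    ring
  have RHSi : ∀ i, (∑ j ∈ Finset.range (m + 1), ∑ l ∈ Finset.range (n + 1),
      (m.choose j : ℝ) * (n.choose l : ℝ) * b i ^ (m + n - j - l) * c i ^ (j + l) *
        ∫ x, x ^ (j + l) ∂μ) = ∫ x, (c i * x + b i) ^ (m + n) ∂μ := by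
    intro i
    symm
    simp_rw [key i]
    rw [integral_finset_sum _ (fun j _ =>
      integrable_finset_sum _ (fun l _ => (hint _ (continuous_pow _)).const_mul _))]
    refine Finset.sum_congr rfl fun j _ => ?_
    rw [integral_finset_sum _ (fun l _ => (hint _ (continuous_pow _)).const_mul _)]
    exact Finset.sum_congr rfl fun l _ => integral_const_mul _ _
  conv_lhs => rw [hμfix]
  rw [integral_finset_sum_measure (fun i _ =>
    (((integrable_map_measure (continuous_pow _).aestronglyMeasurable
      (hmeas i).aemeasurable).mpr (hint _ (hcont i))).smul_measure ENNReal.ofReal_ne_top))]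
  refine Finset.sum_congr rfl fun i _ => ?_
  rw [integral_smul_measure, ENNReal.toReal_ofReal (hp i).1.le,
    integral_map (hmeas i).aemeasurable (continuous_pow _).aestronglyMeasurable,
    RHSi i, smul_eq_mul]
end

section
/- Let μ be a finite positive Borel measure on ℝ with ∫_ℝ |x|^k dμ(x) < ∞ for all k ∈ ℕ. Set 𝓜_k = ∫_ℝ |x|^k dμ(x) and define weights w_k = (1 + k²)·𝓜_k². For a finitely supported sequence c, let f_c(x) = ∑_i c_i x^i and Q(c) = ∫_ℝ |f_c(x)|² dμ(x). Then Q is closable with respect to the weighted ℓ²(w)-norm: if (c_n) is a sequence of finitely supported sequences such that ∑_i w_i |c_n(i)|² → 0 as n → ∞ and ∫_ℝ |f_{c_n}(x) − f_{c_m}(x)|² dμ(x) → 0 as m, n → ∞, then ∫_ℝ |f_{c_n}(x)|² dμ(x) → 0 as n → ∞. -/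
open MeasureTheory Filter


lemma summable_inv_one_add_sq : Summable (fun i : ℕ => 1 / (1 + (i:ℝ)^2)) := by
  have h2 : Summable (fun n : ℕ => 2 * (1 / ((n:ℝ)+1)^2)) := by
    apply Summable.mul_left
    have := (Real.summable_one_div_nat_pow (p := 2)).2 one_lt_two
    have h := (summable_nat_add_iff (f := fun n : ℕ => 1 / (n:ℝ)^2) 1).2 this
    refine h.congr fun n => by push_cast; ring
  refine h2.of_nonneg_of_le (fun i => by positivity) fun i => ?_
  rw [div_le_iff₀ (by positivity)]
  have : ((i:ℝ)+1)^2 ≤ 2 * (1 + (i:ℝ)^2) := by nlinarith [sq_nonneg ((i:ℝ) - 1)]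
  calc (1:ℝ) = ((i:ℝ)+1)^2 * (1/((i:ℝ)+1)^2) := by field_simp
  _ ≤ 2 * (1 + (i:ℝ)^2) * (1/((i:ℝ)+1)^2) := by
      apply mul_le_mul_of_nonneg_right this (by positivity)
  _ = 2 * (1/((i:ℝ)+1)^2) * (1 + (i:ℝ)^2) := by ring

lemma key_bound (μ : Measure ℝ) [IsFiniteMeasure μ]
    (hmom : ∀ k : ℕ, Integrable (fun x : ℝ => |x| ^ k) μ)
    (w : ℕ → ℝ) (hw : ∀ k : ℕ, w k = (1 + (k : ℝ) ^ 2) * (∫ x, |x| ^ k ∂μ) ^ 2)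
    (φ : ℝ → ℝ) (hφm : Measurable φ) (hφ : ∀ x, |φ x| ≤ 1) (d : ℕ →₀ ℝ) :
    |∫ x, (∑ i ∈ d.support, d i * x ^ i) * φ x ∂μ| ≤
      Real.sqrt (∑ i ∈ d.support, w i * d i ^ 2) *
        Real.sqrt (∑' i : ℕ, 1 / (1 + (i:ℝ)^2)) := by
  set M : ℕ → ℝ := fun k => ∫ x, |x| ^ k ∂μ with hM
  have hMnn : ∀ k, 0 ≤ M k := fun k => integral_nonneg fun x => by positivity
  have hwnn : ∀ k, 0 ≤ w k := fun k => by rw [hw k]; positivity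
  have hint : ∀ i : ℕ, Integrable (fun x : ℝ => x ^ i * φ x) μ := by
    intro i
    refine (hmom i).mono' ((measurable_id.pow_const i).mul hφm).aestronglyMeasurable ?_
    filter_upwards with x
    rw [norm_mul, Real.norm_eq_abs, Real.norm_eq_abs, abs_pow]
    exact mul_le_of_le_one_right (by positivity) (hφ x)
  have hsplit : ∫ x, (∑ i ∈ d.support, d i * x ^ i) * φ x ∂μ
      = ∑ i ∈ d.support, d i * ∫ x, x ^ i * φ x ∂μ := by
    rw [show (fun x : ℝ => (∑ i ∈ d.support, d i * x ^ i) * φ x)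
        = fun x => ∑ i ∈ d.support, d i * (x ^ i * φ x) by
      funext x; rw [Finset.sum_mul]; exact Finset.sum_congr rfl fun i _ => by ring]
    rw [integral_finset_sum _ fun i _ => (hint i).const_mul (d i)]
    exact Finset.sum_congr rfl fun i _ => integral_const_mul _ _
  have hterm : ∀ i : ℕ, |∫ x, x ^ i * φ x ∂μ| ≤ M i := by
    intro i
    have hni := norm_integral_le_integral_norm (μ := μ) (fun x : ℝ => x ^ i * φ x)
    simp only [Real.norm_eq_abs] at hni
    refine hni.trans ?_
    refine integral_mono (hint i).abs (hmom i) fun x => ?_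
    rw [abs_mul, abs_pow]
    exact mul_le_of_le_one_right (by positivity) (hφ x)
  have step1 : |∫ x, (∑ i ∈ d.support, d i * x ^ i) * φ x ∂μ|
      ≤ ∑ i ∈ d.support, |d i| * M i := by
    rw [hsplit]
    refine (Finset.abs_sum_le_sum_abs _ _).trans ?_
    refine Finset.sum_le_sum fun i _ => ?_
    rw [abs_mul]
    exact mul_le_mul_of_nonneg_left (hterm i) (abs_nonneg _)
  refine step1.trans ?_
  -- Cauchy–Schwarz
  set a : ℕ → ℝ := fun i => Real.sqrt (w i) * |d i|
  set b : ℕ → ℝ := fun i => 1 / Real.sqrt (1 + (i:ℝ)^2)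
  have hab : ∀ i, |d i| * M i = a i * b i := by
    intro i
    have h1 : (0:ℝ) < 1 + (i:ℝ)^2 := by positivity
    have hs : Real.sqrt (w i) = Real.sqrt (1 + (i:ℝ)^2) * M i := by
      rw [hw i, Real.sqrt_mul h1.le, Real.sqrt_sq (hMnn i)]
    have hsp : (0:ℝ) < Real.sqrt (1 + (i:ℝ)^2) := Real.sqrt_pos.2 h1
    simp only [a, b, hs]
    field_simp
  have hcs : (∑ i ∈ d.support, a i * b i) ^ 2
      ≤ (∑ i ∈ d.support, w i * d i ^ 2) * (∑ i ∈ d.support, 1 / (1 + (i:ℝ)^2)) := by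
    have := Finset.sum_mul_sq_le_sq_mul_sq d.support a b
    have ha2 : ∀ i, a i ^ 2 = w i * d i ^ 2 := fun i => by
      simp only [a, mul_pow, Real.sq_sqrt (hwnn i), sq_abs]
    have hb2 : ∀ i, b i ^ 2 = 1 / (1 + (i:ℝ)^2) := fun i => by
      simp only [b, div_pow, one_pow, Real.sq_sqrt (by positivity : (0:ℝ) ≤ 1 + (i:ℝ)^2)]
    calc (∑ i ∈ d.support, a i * b i) ^ 2
        ≤ (∑ i ∈ d.support, a i ^ 2) * ∑ i ∈ d.support, b i ^ 2 := this
      _ = _ := by rw [Finset.sum_congr rfl fun i _ => ha2 i,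
          Finset.sum_congr rfl fun i _ => hb2 i]
  have hsum_le : (∑ i ∈ d.support, 1 / (1 + (i:ℝ)^2)) ≤ ∑' i : ℕ, 1 / (1 + (i:ℝ)^2) :=
    Summable.sum_le_tsum _ (fun i _ => by positivity) summable_inv_one_add_sq
  have hSnn : 0 ≤ ∑ i ∈ d.support, a i * b i :=
    Finset.sum_nonneg fun i _ => mul_nonneg (mul_nonneg (Real.sqrt_nonneg _) (abs_nonneg _))
      (by positivity)
  have hWnn : 0 ≤ ∑ i ∈ d.support, w i * d i ^ 2 :=
    Finset.sum_nonneg fun i _ => mul_nonneg (hwnn i) (sq_nonneg _)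
  calc ∑ i ∈ d.support, |d i| * M i = ∑ i ∈ d.support, a i * b i :=
      Finset.sum_congr rfl fun i _ => hab i
    _ = Real.sqrt ((∑ i ∈ d.support, a i * b i) ^ 2) := (Real.sqrt_sq hSnn).symm
    _ ≤ Real.sqrt ((∑ i ∈ d.support, w i * d i ^ 2) * ∑' i : ℕ, 1 / (1 + (i:ℝ)^2)) := by
        apply Real.sqrt_le_sqrt
        exact hcs.trans (mul_le_mul_of_nonneg_left hsum_le hWnn)
    _ = _ := Real.sqrt_mul hWnn _

/-- **Closability of the moment quadratic form** in the weighted space `ℓ²(w)` with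
weights `w k = (1 + k²) 𝓜_k²`, where `𝓜_k = ∫ |x|^k dμ`: if a sequence `(c n)` of
finitely supported sequences tends to `0` in `ℓ²(w)` and is Cauchy for the quadratic
form `Q(c) = ∫ |f_c|² dμ` (with `f_c` the generating polynomial of `c`), then
`Q(c n) → 0`. -/
theorem moment_quadratic_form_closable (μ : Measure ℝ) [IsFiniteMeasure μ]
    (hmom : ∀ k : ℕ, Integrable (fun x : ℝ => |x| ^ k) μ)
    (w : ℕ → ℝ) (hw : ∀ k : ℕ, w k = (1 + (k : ℝ) ^ 2) * (∫ x, |x| ^ k ∂μ) ^ 2)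
    (c : ℕ → ℕ →₀ ℝ)
    (h0 : Tendsto (fun n => ∑ i ∈ (c n).support, w i * (c n i) ^ 2) atTop (nhds 0))
    (hcauchy : Tendsto (fun q : ℕ × ℕ =>
        ∫ x, ((∑ i ∈ (c q.1).support, c q.1 i * x ^ i) -
              (∑ i ∈ (c q.2).support, c q.2 i * x ^ i)) ^ 2 ∂μ)
      (atTop ×ˢ atTop) (nhds 0)) :
    Tendsto (fun n => ∫ x, (∑ i ∈ (c n).support, c n i * x ^ i) ^ 2 ∂μ)
      atTop (nhds 0) := by
  haveI : Fact ((1:ENNReal) ≤ 2) := ⟨one_le_two⟩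
  set f : ℕ → ℝ → ℝ := fun n x => ∑ i ∈ (c n).support, c n i * x ^ i with hf
  -- each f n is in L²
  have hmono : ∀ i : ℕ, MemLp (fun x : ℝ => x ^ i) 2 μ := by
    intro i
    rw [memLp_two_iff_integrable_sq (continuous_pow i).aestronglyMeasurable]
    refine (hmom (2 * i)).congr ?_
    filter_upwards with x
    rw [pow_mul, sq_abs, ← pow_mul, mul_comm 2 i, pow_mul]
  have hfm : ∀ n, MemLp (f n) 2 μ := by
    intro n
    exact memLp_finset_sum _ fun i _ => ((hmono i).const_mul (c n i))
  set F : ℕ → Lp ℝ 2 μ := fun n => (hfm n).toLp (f n) with hF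
  -- computing norms via integrals
  have hnorm : ∀ (X : Lp ℝ 2 μ) (g : ℝ → ℝ), (X : ℝ → ℝ) =ᵐ[μ] g →
      ‖X‖ ^ 2 = ∫ x, g x ^ 2 ∂μ := by
    intro X g hXg
    rw [← real_inner_self_eq_norm_sq, L2.inner_def]
    refine integral_congr_ae ?_
    filter_upwards [hXg] with x hx
    simp [hx, RCLike.inner_apply, sq]
  have hsub : ∀ n m : ℕ, ((F n - F m : Lp ℝ 2 μ) : ℝ → ℝ) =ᵐ[μ] fun x => f n x - f m x := by
    intro n m
    filter_upwards [Lp.coeFn_sub (F n) (F m), (hfm n).coeFn_toLp, (hfm m).coeFn_toLp]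
      with x h1 h2 h3
    rw [h1, Pi.sub_apply]
    have e2 : (F n : ℝ → ℝ) x = f n x := h2
    have e3 : (F m : ℝ → ℝ) x = f m x := h3
    rw [e2, e3]
  -- Cauchy sequence
  have hFc : CauchySeq F := by
    rw [cauchySeq_iff_tendsto_dist_atTop_0]
    have heq : (fun q : ℕ × ℕ => dist (F q.1) (F q.2))
        = fun q : ℕ × ℕ => Real.sqrt (∫ x, (f q.1 x - f q.2 x) ^ 2 ∂μ) := by
      funext q
      rw [dist_eq_norm, ← hnorm _ _ (hsub q.1 q.2), Real.sqrt_sq (norm_nonneg _)]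
    rw [heq]
    have := (Real.continuous_sqrt.tendsto' 0 0 Real.sqrt_zero).comp hcauchy
    rw [← prod_atTop_atTop_eq]
    exact this
  obtain ⟨G, hG⟩ := cauchySeq_tendsto_of_complete hFc
  -- measurable representative of G
  have hGm := (Lp.aestronglyMeasurable G)
  set g : ℝ → ℝ := hGm.mk _ with hg
  have hgae : (G : ℝ → ℝ) =ᵐ[μ] g := hGm.ae_eq_mk
  have hgmeas : Measurable g := hGm.stronglyMeasurable_mk.measurable
  -- test function
  set φ : ℝ → ℝ := fun x => max (-1) (min (g x) 1) with hφ
  have hφm : Measurable φ := measurable_const.max (hgmeas.min measurable_const)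
  have hφb : ∀ x, |φ x| ≤ 1 := by
    intro x
    rw [abs_le]
    exact ⟨le_max_left _ _, max_le (by norm_num) (min_le_right _ _)⟩
  have hφmem : MemLp φ 2 μ := by
    rw [memLp_two_iff_integrable_sq hφm.aestronglyMeasurable]
    refine (integrable_const (1:ℝ)).mono' (hφm.pow_const 2).aestronglyMeasurable ?_
    filter_upwards with x
    rw [Real.norm_eq_abs, abs_pow]
    calc |φ x| ^ 2 ≤ 1 ^ 2 := pow_le_pow_left₀ (abs_nonneg _) (hφb x) 2
    _ = 1 := one_pow 2
  set Φ : Lp ℝ 2 μ := hφmem.toLp φ with hΦ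
  -- inner products
  have hinner : ∀ n, (inner ℝ (F n) Φ : ℝ) = ∫ x, f n x * φ x ∂μ := by
    intro n
    rw [L2.inner_def]
    refine integral_congr_ae ?_
    filter_upwards [(hfm n).coeFn_toLp, hφmem.coeFn_toLp] with x h1 h2
    simp [h1, h2, RCLike.inner_apply, F, Φ, mul_comm]
  have hGinner : (inner ℝ G Φ : ℝ) = ∫ x, g x * φ x ∂μ := by
    rw [L2.inner_def]
    refine integral_congr_ae ?_
    filter_upwards [hgae, hφmem.coeFn_toLp] with x h1 h2
    simp [h1, h2, RCLike.inner_apply, Φ, mul_comm]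
  -- the inner products tend to 0 by the key bound
  have hten0 : Tendsto (fun n => ∫ x, f n x * φ x ∂μ) atTop (nhds 0) := by
    refine squeeze_zero_norm (a := fun n => Real.sqrt (∑ i ∈ (c n).support, w i * (c n i) ^ 2) *
        Real.sqrt (∑' i : ℕ, 1 / (1 + (i:ℝ)^2))) (fun n => ?_) ?_
    · exact key_bound μ hmom w hw φ hφm hφb (c n)
    · have hs := (Real.continuous_sqrt.tendsto' 0 0 Real.sqrt_zero).comp h0
      have := hs.mul_const (Real.sqrt (∑' i : ℕ, 1 / (1 + (i:ℝ)^2)))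
      simpa using this
  have hten1 : Tendsto (fun n => (inner ℝ (F n) Φ : ℝ)) atTop (nhds (inner ℝ G Φ : ℝ)) :=
    hG.inner tendsto_const_nhds
  have hGΦ : ∫ x, g x * φ x ∂μ = 0 := by
    rw [← hGinner]
    refine tendsto_nhds_unique hten1 ?_
    have : (fun n => (inner ℝ (F n) Φ : ℝ)) = fun n => ∫ x, f n x * φ x ∂μ :=
      funext hinner
    rw [this]
    exact hten0
  -- g φ ≥ 0 and vanishing integral ⇒ g = 0 a.e.
  have hgφnn : ∀ x, 0 ≤ g x * φ x := by
    intro x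
    rcases le_or_gt 0 (g x) with h | h
    · refine mul_nonneg h (le_trans ?_ (le_max_right _ _))
      exact le_min h zero_le_one
    · have hφle : φ x ≤ 0 := by
        refine max_le (by norm_num) ?_
        rw [min_eq_left (h.le.trans zero_le_one)]
        exact h.le
      nlinarith
  have hgint : Integrable g μ := ((Lp.memLp G).ae_eq hgae).integrable one_le_two
  have hgφint : Integrable (fun x => g x * φ x) μ := by
    refine hgint.abs.mono' (hgmeas.mul hφm).aestronglyMeasurable ?_
    filter_upwards with x
    rw [Real.norm_eq_abs, abs_mul]
    exact mul_le_of_le_one_right (abs_nonneg _) (hφb x)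
  have hgzero : g =ᵐ[μ] 0 := by
    have h := (integral_eq_zero_iff_of_nonneg hgφnn hgφint).1 hGΦ
    filter_upwards [h] with x hx
    simp only [Pi.zero_apply] at hx ⊢
    by_contra hne
    rcases lt_or_gt_of_ne hne with hlt | hgt
    · have hφneg : φ x < 0 := by
        refine max_lt (by norm_num) ?_
        rw [min_eq_left (hlt.le.trans zero_le_one)]
        exact hlt
      exact absurd hx (ne_of_gt (mul_pos_of_neg_of_neg hlt hφneg))
    · have hφpos : 0 < φ x := by
        refine lt_of_lt_of_le ?_ (le_max_right _ _)
        exact lt_min hgt one_pos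
      exact absurd hx (ne_of_gt (mul_pos hgt hφpos))
  have hG0 : G = 0 := by
    rw [Lp.eq_zero_iff_ae_eq_zero]
    exact hgae.trans hgzero
  -- conclusion
  have hFn0 : Tendsto F atTop (nhds 0) := hG0 ▸ hG
  have hnormF : Tendsto (fun n => ‖F n‖ ^ 2) atTop (nhds 0) := by
    have h1 : Tendsto (fun n => ‖F n‖) atTop (nhds 0) := by
      simpa using hFn0.norm
    simpa using h1.pow 2
  refine hnormF.congr fun n => ?_
  exact hnorm (F n) (f n) (hfm n).coeFn_toLp
end

section
/- Let f ∈ L²(0,1). Then for every x ∈ (0,1): the sequence j ↦ ∫₀¹ f(y) y^j dy is square-summable, the series ∑_{j=0}^∞ (∫₀¹ f(y) y^j dy) x^j converges absolutely, the function y ↦ f(y)/(1 − x·y) is integrable on (0,1), and ∑_{j=0}^∞ (∫₀¹ f(y) y^j dy) · x^j = ∫₀¹ f(y)/(1 − x·y) dy. That is, the operator F F* on L²(0,1) is the integral operator K with kernel k(x,y) = 1/(1 − xy). -/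
set_option maxHeartbeats 1000000

open MeasureTheory
open scoped ENNReal NNReal

section AuxLemmas
open Set


lemma aux_one_le_sqrt (j : ℕ) : (1:ℝ) ≤ Real.sqrt (j+1) := by
  rw [Real.le_sqrt zero_le_one (by positivity)]
  nlinarith [Nat.cast_nonneg (α := ℝ) j]

lemma aux_sum_inv_sqrt (N : ℕ) : ∑ j ∈ Finset.range N, 1 / Real.sqrt (j+1) ≤ 2 * Real.sqrt N := by
  induction N with
  | zero => simp
  | succ n ih =>
    rw [Finset.sum_range_succ]
    have hpos : 0 < Real.sqrt (n+1) := Real.sqrt_pos.2 (by positivity)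
    have key : 1 / Real.sqrt ((n:ℝ)+1) ≤ 2 * Real.sqrt (n+1) - 2 * Real.sqrt n := by
      rw [div_le_iff₀ hpos]
      nlinarith [Real.sq_sqrt (by positivity : (0:ℝ) ≤ (n:ℝ)+1),
        Real.sq_sqrt (Nat.cast_nonneg n), Real.sqrt_nonneg n, Real.sqrt_nonneg ((n:ℝ)+1),
        sq_nonneg (Real.sqrt ((n:ℝ)+1) - Real.sqrt n)]
    push_cast
    push_cast at ih key
    linarith

lemma aux_S_summable {t : ℝ} (h0 : 0 ≤ t) (h1 : t < 1) :
    Summable (fun j : ℕ => t^j / Real.sqrt (j+1)) := by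
  apply Summable.of_nonneg_of_le (fun j => by positivity) (fun j => ?_)
    (summable_geometric_of_lt_one h0 h1)
  exact div_le_self (by positivity) (aux_one_le_sqrt j)

lemma aux_S_bound {t : ℝ} (h0 : 0 ≤ t) (h1 : t < 1) :
    ∑' j : ℕ, t^j / Real.sqrt (j+1) ≤ 4 / Real.sqrt (1-t) := by
  have h1t : 0 < 1 - t := by linarith
  have hinv1 : (1:ℝ) ≤ (1-t)⁻¹ := one_le_inv_iff₀.2 ⟨h1t, by linarith⟩
  obtain ⟨N, hNge, hNle⟩ : ∃ N : ℕ, (1-t)⁻¹ ≤ (N:ℝ) ∧ (N:ℝ) ≤ 2 * (1-t)⁻¹ := by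
    refine ⟨⌈(1-t)⁻¹⌉₊, Nat.le_ceil _, ?_⟩
    have := Nat.ceil_lt_add_one (le_of_lt (lt_of_lt_of_le zero_lt_one hinv1))
    linarith
  have hN1 : (1:ℝ) ≤ (N:ℝ) := le_trans hinv1 hNge
  have hsqrtN : 0 < Real.sqrt N := Real.sqrt_pos.2 (by linarith)
  have hst : 0 < Real.sqrt (1-t) := Real.sqrt_pos.2 h1t
  have hsum := aux_S_summable h0 h1
  rw [← hsum.sum_add_tsum_nat_add N]
  have hhead : ∑ j ∈ Finset.range N, t^j / Real.sqrt (j+1) ≤ 2 * Real.sqrt N := by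
    refine le_trans (Finset.sum_le_sum fun j _ => ?_) (aux_sum_inv_sqrt N)
    have : (0:ℝ) < Real.sqrt (j+1) := lt_of_lt_of_le zero_lt_one (aux_one_le_sqrt j)
    gcongr
    exact pow_le_one₀ h0 h1.le
  have htail : ∑' j : ℕ, t^(j+N) / Real.sqrt ((j+N:ℕ)+1) ≤ 1 / ((1-t) * Real.sqrt N) := by
    have hb : ∀ j : ℕ, t^(j+N) / Real.sqrt ((j+N:ℕ)+1) ≤ t^j * (Real.sqrt N)⁻¹ := by
      intro j
      have h1' : Real.sqrt N ≤ Real.sqrt ((j+N:ℕ)+1) := by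
        apply Real.sqrt_le_sqrt; push_cast; linarith [Nat.cast_nonneg (α := ℝ) j]
      have htN : t^N ≤ 1 := pow_le_one₀ h0 h1.le
      have hinvle : (Real.sqrt ((j+N:ℕ)+1))⁻¹ ≤ (Real.sqrt N)⁻¹ := inv_anti₀ hsqrtN h1'
      rw [pow_add, div_eq_mul_inv]
      have h2 := mul_le_mul (mul_le_mul_of_nonneg_left htN (pow_nonneg h0 j)) hinvle
        (by positivity) (by positivity)
      simpa [mul_one] using h2
    have hsum2 : Summable (fun j : ℕ => t^j * (Real.sqrt N)⁻¹) :=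
      (summable_geometric_of_lt_one h0 h1).mul_right _
    calc ∑' j : ℕ, t^(j+N) / Real.sqrt ((j+N:ℕ)+1)
        ≤ ∑' j : ℕ, t^j * (Real.sqrt N)⁻¹ :=
          ((summable_nat_add_iff N).2 hsum).tsum_le_tsum hb hsum2
      _ = (1-t)⁻¹ * (Real.sqrt N)⁻¹ := by rw [tsum_mul_right, tsum_geometric_of_lt_one h0 h1]
      _ = 1 / ((1-t) * Real.sqrt N) := by rw [one_div, mul_inv]
  have hb1 : 2 * Real.sqrt N ≤ 3 / Real.sqrt (1-t) := by
    have h2 : Real.sqrt N ≤ Real.sqrt (2 * (1-t)⁻¹) := Real.sqrt_le_sqrt hNle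
    have h3 : Real.sqrt (2 * (1-t)⁻¹) = Real.sqrt 2 * (Real.sqrt (1-t))⁻¹ := by
      rw [Real.sqrt_mul (by norm_num), Real.sqrt_inv]
    have h4 : Real.sqrt 2 ≤ 1.5 := by
      rw [show (1.5:ℝ) = Real.sqrt (1.5^2) by rw [Real.sqrt_sq]; norm_num]
      exact Real.sqrt_le_sqrt (by norm_num)
    rw [h3] at h2
    rw [div_eq_mul_inv]
    have h5 : (0:ℝ) < (Real.sqrt (1-t))⁻¹ := by positivity
    nlinarith
  have hb2 : 1 / ((1-t) * Real.sqrt N) ≤ 1 / Real.sqrt (1-t) := by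
    refine one_div_le_one_div_of_le hst ?_
    have h6 : Real.sqrt ((1-t)⁻¹) ≤ Real.sqrt N := Real.sqrt_le_sqrt hNge
    rw [Real.sqrt_inv] at h6
    calc Real.sqrt (1-t) = (1-t) / Real.sqrt (1-t) := (Real.div_sqrt).symm
      _ = (1-t) * (Real.sqrt (1-t))⁻¹ := div_eq_mul_inv _ _
      _ ≤ (1-t) * Real.sqrt N := by
        have h7 : (Real.sqrt (1-t))⁻¹ ≤ Real.sqrt N := h6
        exact mul_le_mul_of_nonneg_left h7 h1t.le
  calc ∑ j ∈ Finset.range N, t^j / Real.sqrt (j+1) + ∑' j : ℕ, t^(j+N) / Real.sqrt ((j+N:ℕ)+1)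
      ≤ 2 * Real.sqrt N + 1 / ((1-t) * Real.sqrt N) := add_le_add hhead htail
    _ ≤ 3 / Real.sqrt (1-t) + 1 / Real.sqrt (1-t) := add_le_add hb1 hb2
    _ = 4 / Real.sqrt (1-t) := by ring



lemma aux_w_intervalIntegrable (a : ℝ) :
    IntervalIntegrable (fun y : ℝ => (1-y)^(-(1/2):ℝ)) volume a 1 := by
  have h := (intervalIntegral.intervalIntegrable_rpow' (a := 0) (b := 1-a)
    (r := -(1/2)) (by norm_num)).comp_sub_left 1
  simpa using h.symm

lemma aux_w_integrableOn : IntegrableOn (fun y : ℝ => (1-y)^(-(1/2):ℝ)) (Ioo (0:ℝ) 1) := by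
  have h := (aux_w_intervalIntegrable 0)
  rw [intervalIntegrable_iff] at h
  exact h.mono_set (by rw [uIoc_of_le (by norm_num : (0:ℝ) ≤ 1)]; exact Ioo_subset_Ioc_self)

lemma aux_Bfun_measurable (j : ℕ) :
    Measurable (fun y : ℝ => y^j * (1-y)^(-(1/2):ℝ)) := by fun_prop

lemma aux_B_integrableOn (j : ℕ) :
    IntegrableOn (fun y : ℝ => y^j * (1-y)^(-(1/2):ℝ)) (Ioo (0:ℝ) 1) := by
  refine Integrable.mono aux_w_integrableOn (aux_Bfun_measurable j).aestronglyMeasurable ?_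
  filter_upwards [ae_restrict_mem measurableSet_Ioo] with y hy
  have h1 : 0 < 1 - y := by linarith [hy.2]
  have h2 : (0:ℝ) ≤ (1-y)^(-(1/2):ℝ) := Real.rpow_nonneg h1.le _
  have h3 : y^j ≤ 1 := pow_le_one₀ hy.1.le hy.2.le
  rw [Real.norm_eq_abs, Real.norm_eq_abs,
    abs_of_nonneg (mul_nonneg (pow_nonneg hy.1.le j) h2), abs_of_nonneg h2]
  nlinarith [pow_nonneg hy.1.le j]

lemma aux_B_bound (j : ℕ) :
    ∫ y in Ioo (0:ℝ) 1, y^j * (1-y)^(-(1/2):ℝ) ≤ 3 / Real.sqrt ((j:ℝ)+1) := by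
  set ε : ℝ := ((j:ℝ)+1)⁻¹ with hε
  have hε0 : 0 < ε := by positivity
  have hε1 : ε ≤ 1 := by
    rw [hε, inv_le_one_iff₀]; right; push_cast; linarith [Nat.cast_nonneg (α := ℝ) j]
  have hsq : Real.sqrt ((j:ℝ)+1) * Real.sqrt ((j:ℝ)+1) = (j:ℝ)+1 :=
    Real.mul_self_sqrt (by positivity)
  have hsqpos : 0 < Real.sqrt ((j:ℝ)+1) := Real.sqrt_pos.2 (by positivity)
  have hsplit : Ioc (0:ℝ) (1-ε) ∪ Ioo (1-ε) 1 = Ioo (0:ℝ) 1 :=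
    Set.Ioc_union_Ioo_eq_Ioo (by linarith) (by linarith)
  have hdisj : Disjoint (Ioc (0:ℝ) (1-ε)) (Ioo (1-ε) 1) := by
    rw [Set.disjoint_left]; rintro y ⟨_, h1⟩ ⟨h2, _⟩; linarith
  have hint1 : IntegrableOn (fun y : ℝ => y^j * (1-y)^(-(1/2):ℝ)) (Ioc (0:ℝ) (1-ε)) :=
    (aux_B_integrableOn j).mono_set (fun y hy => ⟨hy.1, by linarith [hy.2]⟩)
  have hint2 : IntegrableOn (fun y : ℝ => y^j * (1-y)^(-(1/2):ℝ)) (Ioo (1-ε) 1) :=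
    (aux_B_integrableOn j).mono_set (fun y hy => ⟨by linarith [hy.1], hy.2⟩)
  rw [← hsplit, setIntegral_union hdisj measurableSet_Ioo hint1 hint2]
  have hpow : ∫ y in Ioc (0:ℝ) 1, y^j = 1/((j:ℝ)+1) := by
    rw [← intervalIntegral.integral_of_le (by norm_num : (0:ℝ) ≤ 1), integral_pow]
    push_cast; norm_num
  have hintpow : IntegrableOn (fun y : ℝ => Real.sqrt ((j:ℝ)+1) * y^j) (Ioc (0:ℝ) 1) :=
    (continuous_const.mul (continuous_pow j)).integrableOn_Ioc
  have hpiece1 : ∫ y in Ioc (0:ℝ) (1-ε), y^j * (1-y)^(-(1/2):ℝ) ≤ 1 / Real.sqrt ((j:ℝ)+1) := by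
    have h3 : ε^(-(1/2):ℝ) = Real.sqrt ((j:ℝ)+1) := by
      rw [hε, ← Real.rpow_neg_one ((j:ℝ)+1), ← Real.rpow_mul (by positivity),
        Real.sqrt_eq_rpow]
      norm_num
    have hb : ∀ y ∈ Ioc (0:ℝ) (1-ε), y^j * (1-y)^(-(1/2):ℝ) ≤ Real.sqrt ((j:ℝ)+1) * y^j := by
      intro y hy
      have h1 : ε ≤ 1 - y := by linarith [hy.2]
      have h2 : (1-y)^(-(1/2):ℝ) ≤ ε^(-(1/2):ℝ) :=
        Real.rpow_le_rpow_of_nonpos hε0 h1 (by norm_num)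
      calc y^j * (1-y)^(-(1/2):ℝ) ≤ y^j * ε^(-(1/2):ℝ) :=
            mul_le_mul_of_nonneg_left h2 (pow_nonneg hy.1.le j)
        _ = Real.sqrt ((j:ℝ)+1) * y^j := by rw [h3]; ring
    calc ∫ y in Ioc (0:ℝ) (1-ε), y^j * (1-y)^(-(1/2):ℝ)
        ≤ ∫ y in Ioc (0:ℝ) (1-ε), Real.sqrt ((j:ℝ)+1) * y^j :=
          setIntegral_mono_on hint1 (hintpow.mono_set
            (fun y hy => ⟨hy.1, by linarith [hy.2]⟩)) measurableSet_Ioc hb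
      _ ≤ ∫ y in Ioc (0:ℝ) 1, Real.sqrt ((j:ℝ)+1) * y^j := by
          apply setIntegral_mono_set hintpow ?_ ?_
          · filter_upwards [ae_restrict_mem measurableSet_Ioc] with y hy
            exact mul_nonneg hsqpos.le (pow_nonneg hy.1.le j)
          · exact HasSubset.Subset.eventuallyLE (fun y hy => ⟨hy.1, by linarith [hy.2]⟩)
      _ = 1 / Real.sqrt ((j:ℝ)+1) := by
          rw [MeasureTheory.integral_const_mul, hpow]
          field_simp
          exact Real.sq_sqrt (by positivity)
  have hpiece2 : ∫ y in Ioo (1-ε) 1, y^j * (1-y)^(-(1/2):ℝ) ≤ 2 / Real.sqrt ((j:ℝ)+1) := by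
    have hwint : IntegrableOn (fun y : ℝ => (1-y)^(-(1/2):ℝ)) (Ioo (1-ε) 1) := by
      have h := (aux_w_intervalIntegrable (1-ε))
      rw [intervalIntegrable_iff] at h
      exact h.mono_set (by rw [uIoc_of_le (by linarith : (1-ε:ℝ) ≤ 1)]; exact Ioo_subset_Ioc_self)
    have hb : ∀ y ∈ Ioo (1-ε) 1, y^j * (1-y)^(-(1/2):ℝ) ≤ (1-y)^(-(1/2):ℝ) := by
      intro y hy
      have hy0 : 0 ≤ y := by nlinarith [hy.1, hε1]
      have h2 : (0:ℝ) ≤ (1-y)^(-(1/2):ℝ) := Real.rpow_nonneg (by linarith [hy.2]) _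
      have h3 : y^j ≤ 1 := pow_le_one₀ hy0 hy.2.le
      nlinarith [pow_nonneg hy0 j]
    calc ∫ y in Ioo (1-ε) 1, y^j * (1-y)^(-(1/2):ℝ)
        ≤ ∫ y in Ioo (1-ε) 1, (1-y)^(-(1/2):ℝ) :=
          setIntegral_mono_on hint2 hwint measurableSet_Ioo hb
      _ = ∫ y in (1-ε)..1, (1-y)^(-(1/2):ℝ) := by
          rw [intervalIntegral.integral_of_le (by linarith : (1-ε:ℝ) ≤ 1),
            integral_Ioc_eq_integral_Ioo]
      _ = ∫ u in (0:ℝ)..ε, u^(-(1/2):ℝ) := by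
          have := intervalIntegral.integral_comp_sub_left (a := 1-ε) (b := 1)
            (fun u : ℝ => u^(-(1/2):ℝ)) 1
          simpa using this
      _ = 2 / Real.sqrt ((j:ℝ)+1) := by
          rw [integral_rpow (Or.inl (by norm_num))]
          rw [Real.zero_rpow (by norm_num)]
          rw [show (-(1/2):ℝ) + 1 = 1/2 by norm_num, ← Real.sqrt_eq_rpow, hε, Real.sqrt_inv]
          field_simp
          simp
  calc (∫ y in Ioc (0:ℝ) (1-ε), y^j * (1-y)^(-(1/2):ℝ))
        + ∫ y in Ioo (1-ε) 1, y^j * (1-y)^(-(1/2):ℝ)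
      ≤ 1 / Real.sqrt ((j:ℝ)+1) + 2 / Real.sqrt ((j:ℝ)+1) := add_le_add hpiece1 hpiece2
    _ = 3 / Real.sqrt ((j:ℝ)+1) := by ring




end AuxLemmas

section Main
open Set

/-- **`FF*` is the integral operator with kernel `1/(1-xy)`.** For `f ∈ L²(0,1)` and
`x ∈ (0,1)`: the moment sequence of `f` is square-summable, the series
`∑ⱼ (∫₀¹ f(y) y^j dy) x^j` converges absolutely, `y ↦ f(y)/(1-xy)` is integrable on
`(0,1)`, and `∑ⱼ (∫₀¹ f(y) y^j dy) x^j = ∫₀¹ f(y)/(1-xy) dy`. -/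
theorem FFstar_eq_integral_operator (f : ℝ → ℂ)
    (hf : MemLp f 2 (volume.restrict (Set.Ioo (0 : ℝ) 1)))
    (x : ℝ) (hx : x ∈ Set.Ioo (0 : ℝ) 1) :
    Memℓp (fun j : ℕ => ∫ y in Set.Ioo (0 : ℝ) 1, f y * (y : ℂ) ^ j) 2 ∧
    Summable (fun j : ℕ =>
      ‖(∫ y in Set.Ioo (0 : ℝ) 1, f y * (y : ℂ) ^ j) * (x : ℂ) ^ j‖) ∧
    IntegrableOn (fun y : ℝ => f y / (1 - (x : ℂ) * (y : ℂ))) (Set.Ioo 0 1) ∧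
    ∑' j : ℕ, (∫ y in Set.Ioo (0 : ℝ) 1, f y * (y : ℂ) ^ j) * (x : ℂ) ^ j =
      ∫ y in Set.Ioo (0 : ℝ) 1, f y / (1 - (x : ℂ) * (y : ℂ)) := by
  obtain ⟨hx0, hx1⟩ := hx
  haveI : IsFiniteMeasure (volume.restrict (Set.Ioo (0 : ℝ) 1)) :=
    ⟨by rw [Measure.restrict_apply_univ, Real.volume_Ioo]; exact ENNReal.ofReal_lt_top⟩
  have hfint : Integrable f (volume.restrict (Set.Ioo (0 : ℝ) 1)) :=
    hf.integrable one_le_two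
  have hnormint : Integrable (fun y => ‖f y‖) (volume.restrict (Set.Ioo (0 : ℝ) 1)) :=
    hfint.norm
  set C : ℝ := ∫ y in Set.Ioo (0 : ℝ) 1, ‖f y‖ with hC
  have hC0 : 0 ≤ C := setIntegral_nonneg measurableSet_Ioo (fun y _ => norm_nonneg _)
  -- each integrand is integrable
  have hcont : ∀ j : ℕ, Continuous (fun y : ℝ => ((y : ℂ)) ^ j) :=
    fun j => (Complex.continuous_ofReal.pow j)
  have hcint : ∀ j : ℕ, Integrable (fun y => f y * (y:ℂ)^j)
      (volume.restrict (Set.Ioo (0 : ℝ) 1)) := by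
    intro j
    refine Integrable.mono hnormint (hf.1.mul ((hcont j).aestronglyMeasurable)) ?_
    filter_upwards [ae_restrict_mem measurableSet_Ioo] with y hy
    rw [norm_mul, norm_norm, norm_pow, Complex.norm_real, Real.norm_eq_abs,
      abs_of_nonneg hy.1.le]
    nlinarith [norm_nonneg (f y), pow_le_one₀ hy.1.le hy.2.le (n := j),
      pow_nonneg hy.1.le j]
  -- bound on the moments
  have hmom : ∀ j : ℕ, ‖∫ y in Set.Ioo (0 : ℝ) 1, f y * (y : ℂ) ^ j‖ ≤ C := by
    intro j
    refine le_trans (norm_integral_le_integral_norm _) ?_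
    refine setIntegral_mono_on (hcint j).norm hnormint measurableSet_Ioo ?_
    intro y hy
    rw [norm_mul, norm_pow, Complex.norm_real, Real.norm_eq_abs, abs_of_nonneg hy.1.le]
    nlinarith [norm_nonneg (f y), pow_le_one₀ hy.1.le hy.2.le (n := j),
      pow_nonneg hy.1.le j]
  have hgeo : Summable (fun j : ℕ => x ^ j) := summable_geometric_of_lt_one hx0.le hx1
  -- Part 2
  have part2 : Summable (fun j : ℕ =>
      ‖(∫ y in Set.Ioo (0 : ℝ) 1, f y * (y : ℂ) ^ j) * (x : ℂ) ^ j‖) := by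
    refine Summable.of_nonneg_of_le (fun j => norm_nonneg _) (fun j => ?_) (hgeo.mul_left C)
    rw [norm_mul, norm_pow, Complex.norm_real, Real.norm_eq_abs, abs_of_nonneg hx0.le]
    exact mul_le_mul_of_nonneg_right (hmom j) (pow_nonneg hx0.le j)
  -- Part 3
  have hdenom : ∀ y ∈ Set.Ioo (0:ℝ) 1, (1 - x : ℝ) ≤ ‖(1 - (x:ℂ) * (y:ℂ))‖ := by
    intro y hy
    have h1 : x * y < x := by nlinarith [hy.1, hy.2]
    have h2 : (1 - (x:ℂ) * (y:ℂ)) = ((1 - x * y : ℝ) : ℂ) := by push_cast; ring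
    rw [h2, Complex.norm_real, Real.norm_eq_abs, abs_of_nonneg (by nlinarith)]
    linarith
  have hdiv_aesm : AEStronglyMeasurable (fun y : ℝ => f y / (1 - (x : ℂ) * (y : ℂ)))
      (volume.restrict (Set.Ioo (0 : ℝ) 1)) := by
    have h1 : Measurable (fun y : ℝ => (1 - (x : ℂ) * (y : ℂ))⁻¹) := by fun_prop
    simp_rw [div_eq_mul_inv]
    exact hf.1.mul h1.aestronglyMeasurable
  have part3 : IntegrableOn (fun y : ℝ => f y / (1 - (x : ℂ) * (y : ℂ))) (Set.Ioo 0 1) := by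
    refine Integrable.mono' (hnormint.const_mul (1-x)⁻¹) hdiv_aesm ?_
    filter_upwards [ae_restrict_mem measurableSet_Ioo] with y hy
    rw [norm_div]
    rw [div_le_iff₀ (lt_of_lt_of_le (by linarith : (0:ℝ) < 1 - x) (hdenom y hy))]
    have h1x : (0:ℝ) < 1 - x := by linarith
    have hinv : (1-x) * (1-x)⁻¹ = 1 := mul_inv_cancel₀ (ne_of_gt h1x)
    have hinvpos : (0:ℝ) < (1-x)⁻¹ := by positivity
    nlinarith [norm_nonneg (f y), mul_le_mul_of_nonneg_left (hdenom y hy)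
      (mul_nonneg hinvpos.le (norm_nonneg (f y)))]
  -- Part 4
  have part4 : ∑' j : ℕ, (∫ y in Set.Ioo (0 : ℝ) 1, f y * (y : ℂ) ^ j) * (x : ℂ) ^ j =
      ∫ y in Set.Ioo (0 : ℝ) 1, f y / (1 - (x : ℂ) * (y : ℂ)) := by
    have hFint : ∀ j : ℕ, Integrable (fun y : ℝ => f y * ((x:ℂ) * (y:ℂ))^j)
        (volume.restrict (Set.Ioo (0 : ℝ) 1)) := by
      intro j
      have := (hcint j).smul ((x:ℂ)^j)
      apply Integrable.congr ((hcint j).smul ((x:ℂ)^j))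
      filter_upwards with y
      simp [smul_eq_mul]; ring
    have hkey : ∀ j : ℕ, (∫ y in Set.Ioo (0 : ℝ) 1, f y * (y : ℂ) ^ j) * (x : ℂ) ^ j =
        ∫ y in Set.Ioo (0 : ℝ) 1, f y * ((x:ℂ) * (y:ℂ))^j := by
      intro j
      rw [← integral_mul_const]
      apply setIntegral_congr_fun measurableSet_Ioo
      intro y _
      ring
    have hnormbound : ∀ j : ℕ, (∫ y in Set.Ioo (0 : ℝ) 1, ‖f y * ((x:ℂ) * (y:ℂ))^j‖) ≤ C * x^j := by
      intro j
      rw [← integral_mul_const]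
      refine setIntegral_mono_on (hFint j).norm (hnormint.mul_const _) measurableSet_Ioo ?_
      intro y hy
      rw [norm_mul, norm_pow, norm_mul, Complex.norm_real, Complex.norm_real,
        Real.norm_eq_abs, Real.norm_eq_abs, abs_of_nonneg hx0.le, abs_of_nonneg hy.1.le]
      have h1 : (x * y)^j ≤ x^j :=
        pow_le_pow_left₀ (by nlinarith [hy.1]) (by nlinarith [hy.2]) j
      exact mul_le_mul_of_nonneg_left h1 (norm_nonneg _)
    have hsumnorm : Summable (fun j : ℕ => ∫ y in Set.Ioo (0 : ℝ) 1, ‖f y * ((x:ℂ) * (y:ℂ))^j‖) := by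
      refine Summable.of_nonneg_of_le
        (fun j => setIntegral_nonneg measurableSet_Ioo (fun y _ => norm_nonneg _))
        hnormbound (hgeo.mul_left C)
    calc ∑' j : ℕ, (∫ y in Set.Ioo (0 : ℝ) 1, f y * (y : ℂ) ^ j) * (x : ℂ) ^ j
        = ∑' j : ℕ, ∫ y in Set.Ioo (0 : ℝ) 1, f y * ((x:ℂ) * (y:ℂ))^j := by
          exact tsum_congr hkey
      _ = ∫ y in Set.Ioo (0 : ℝ) 1, ∑' j : ℕ, f y * ((x:ℂ) * (y:ℂ))^j :=
          integral_tsum_of_summable_integral_norm hFint hsumnorm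
      _ = ∫ y in Set.Ioo (0 : ℝ) 1, f y / (1 - (x : ℂ) * (y : ℂ)) := by
          apply setIntegral_congr_fun measurableSet_Ioo
          intro y hy
          have hlt : ‖(x:ℂ) * (y:ℂ)‖ < 1 := by
            rw [norm_mul, Complex.norm_real, Complex.norm_real, Real.norm_eq_abs,
              Real.norm_eq_abs, abs_of_nonneg hx0.le, abs_of_nonneg hy.1.le]
            nlinarith [hy.1, hy.2]
          show (∑' j : ℕ, f y * ((x:ℂ) * (y:ℂ))^j) = f y / (1 - (x:ℂ)*(y:ℂ))
          rw [tsum_mul_left, tsum_geometric_of_norm_lt_one hlt, div_eq_mul_inv]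
  -- Part 1: the moment sequence is square-summable (Hilbert's inequality via Cauchy-Schwarz)
  have hnormsq : Integrable (fun y => ‖f y‖^2) (volume.restrict (Set.Ioo (0 : ℝ) 1)) :=
    hf.norm.integrable_sq
  set K2 : ℝ := ∫ y in Set.Ioo (0 : ℝ) 1, ‖f y‖^2 with hK2def
  set A : ℕ → ℝ := fun j => ∫ y in Set.Ioo (0:ℝ) 1, ‖f y‖^2 * (y^j * Real.sqrt (1-y)) with hAdef
  set B : ℕ → ℝ := fun j => ∫ y in Set.Ioo (0:ℝ) 1, y^j * (1-y)^(-(1/2):ℝ) with hBdef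
  have hA0 : ∀ j, 0 ≤ A j := by
    intro j
    refine setIntegral_nonneg measurableSet_Ioo (fun y hy => ?_)
    exact mul_nonneg (sq_nonneg _)
      (mul_nonneg (pow_nonneg hy.1.le j) (Real.sqrt_nonneg _))
  have hB0 : ∀ j, 0 ≤ B j := by
    intro j
    refine setIntegral_nonneg measurableSet_Ioo (fun y hy => ?_)
    exact mul_nonneg (pow_nonneg hy.1.le j) (Real.rpow_nonneg (by linarith [hy.2]) _)
  have hmom2 : ∀ j : ℕ, ‖∫ y in Set.Ioo (0 : ℝ) 1, f y * (y : ℂ) ^ j‖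
      ≤ ∫ y in Set.Ioo (0:ℝ) 1, ‖f y‖ * y^j := by
    intro j
    refine le_trans (norm_integral_le_integral_norm _) (le_of_eq ?_)
    refine integral_congr_ae ?_
    filter_upwards [ae_restrict_mem measurableSet_Ioo] with y hy
    rw [norm_mul, norm_pow, Complex.norm_real, Real.norm_eq_abs, abs_of_nonneg hy.1.le]
  -- Cauchy-Schwarz step
  have hCS : ∀ j : ℕ, ‖∫ y in Set.Ioo (0 : ℝ) 1, f y * (y : ℂ) ^ j‖^2 ≤ A j * B j := by
    intro j
    set u : ℝ → ℝ := fun y => ‖f y‖ * (y ^ ((j:ℝ)/2) * (1-y) ^ ((1/4):ℝ)) with hudef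
    set v : ℝ → ℝ := fun y => y ^ ((j:ℝ)/2) * (1-y) ^ (-(1/4):ℝ) with hvdef
    have hu_meas : AEStronglyMeasurable u (volume.restrict (Set.Ioo (0 : ℝ) 1)) := by
      refine (hf.1.norm.mul ?_)
      exact (by fun_prop :
        Measurable fun y : ℝ => y ^ ((j:ℝ)/2) * (1-y) ^ ((1/4):ℝ)).aestronglyMeasurable
    have hv_meas : AEStronglyMeasurable v (volume.restrict (Set.Ioo (0 : ℝ) 1)) :=
      (by fun_prop :
        Measurable fun y : ℝ => y ^ ((j:ℝ)/2) * (1-y) ^ (-(1/4):ℝ)).aestronglyMeasurable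
    have hu_mem : MemLp u 2 (volume.restrict (Set.Ioo (0 : ℝ) 1)) := by
      refine MemLp.of_le hf.norm hu_meas ?_
      filter_upwards [ae_restrict_mem measurableSet_Ioo] with y hy
      have h1 : y ^ ((j:ℝ)/2) ≤ 1 := Real.rpow_le_one hy.1.le hy.2.le (by positivity)
      have h2 : (1-y) ^ ((1/4):ℝ) ≤ 1 :=
        Real.rpow_le_one (by linarith [hy.2]) (by linarith [hy.1]) (by norm_num)
      have h3 : (0:ℝ) ≤ y ^ ((j:ℝ)/2) := Real.rpow_nonneg hy.1.le _
      have h4 : (0:ℝ) ≤ (1-y) ^ ((1/4):ℝ) := Real.rpow_nonneg (by linarith [hy.2]) _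
      rw [hudef]
      simp only [Real.norm_eq_abs, abs_norm]
      rw [abs_of_nonneg (by positivity : (0:ℝ) ≤ ‖f y‖ * (y ^ ((j:ℝ)/2) * (1-y) ^ ((1/4):ℝ)))]
      nlinarith [norm_nonneg (f y), mul_le_one₀ h1 h4 h2]
    have hv_sq_eq : (fun y : ℝ => y^j * (1-y)^(-(1/2):ℝ))
        =ᵐ[volume.restrict (Set.Ioo (0 : ℝ) 1)] (fun y => v y ^ 2) := by
      filter_upwards [ae_restrict_mem measurableSet_Ioo] with y hy
      rw [hvdef]
      have hy0 : (0:ℝ) ≤ y := hy.1.le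
      have hy1 : (0:ℝ) ≤ 1 - y := by linarith [hy.2]
      rw [mul_pow, ← Real.rpow_natCast (y ^ ((j:ℝ)/2)) 2,
        ← Real.rpow_natCast ((1-y) ^ (-(1/4):ℝ)) 2,
        ← Real.rpow_mul hy0, ← Real.rpow_mul hy1]
      norm_num
    have hv_sq_int : Integrable (fun y => v y ^ 2) (volume.restrict (Set.Ioo (0 : ℝ) 1)) :=
      (aux_B_integrableOn j).congr hv_sq_eq
    have hv_mem : MemLp v 2 (volume.restrict (Set.Ioo (0 : ℝ) 1)) :=
      (memLp_two_iff_integrable_sq hv_meas).2 hv_sq_int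
    have hconj : Real.HolderConjugate 2 2 := Real.HolderConjugate.two_two
    have h2e : ENNReal.ofReal (2:ℝ) = 2 := by norm_num
    have hu_nonneg : 0 ≤ᵐ[volume.restrict (Set.Ioo (0 : ℝ) 1)] u := by
      filter_upwards [ae_restrict_mem measurableSet_Ioo] with y hy
      have h3 : (0:ℝ) ≤ y ^ ((j:ℝ)/2) := Real.rpow_nonneg hy.1.le _
      have h4 : (0:ℝ) ≤ (1-y) ^ ((1/4):ℝ) := Real.rpow_nonneg (by linarith [hy.2]) _
      rw [hudef]
      positivity
    have hv_nonneg : 0 ≤ᵐ[volume.restrict (Set.Ioo (0 : ℝ) 1)] v := by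
      filter_upwards [ae_restrict_mem measurableSet_Ioo] with y hy
      have h3 : (0:ℝ) ≤ y ^ ((j:ℝ)/2) := Real.rpow_nonneg hy.1.le _
      have h4 : (0:ℝ) ≤ (1-y) ^ (-(1/4):ℝ) := Real.rpow_nonneg (by linarith [hy.2]) _
      rw [hvdef]
      positivity
    have hCS0 := integral_mul_le_Lp_mul_Lq_of_nonneg hconj hu_nonneg hv_nonneg
      (h2e ▸ hu_mem) (h2e ▸ hv_mem)
    have h_uv : ∫ y in Set.Ioo (0:ℝ) 1, u y * v y
        = ∫ y in Set.Ioo (0:ℝ) 1, ‖f y‖ * y^j := by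
      refine integral_congr_ae ?_
      filter_upwards [ae_restrict_mem measurableSet_Ioo] with y hy
      rw [hudef, hvdef]
      have hy0 : (0:ℝ) < y := hy.1
      have hy1 : (0:ℝ) < 1 - y := by linarith [hy.2]
      have e1 : y ^ ((j:ℝ)/2) * y ^ ((j:ℝ)/2) = y^j := by
        rw [← Real.rpow_add hy0]
        norm_num
      have e2 : (1-y) ^ ((1/4):ℝ) * (1-y) ^ (-(1/4):ℝ) = 1 := by
        rw [← Real.rpow_add hy1]
        norm_num
      calc ‖f y‖ * (y ^ ((j:ℝ)/2) * (1-y) ^ ((1/4):ℝ)) * (y ^ ((j:ℝ)/2) * (1-y) ^ (-(1/4):ℝ))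
          = ‖f y‖ * (y ^ ((j:ℝ)/2) * y ^ ((j:ℝ)/2))
            * ((1-y) ^ ((1/4):ℝ) * (1-y) ^ (-(1/4):ℝ)) := by ring
        _ = ‖f y‖ * y^j := by rw [e1, e2]; ring
    have h_usq : ∫ y in Set.Ioo (0:ℝ) 1, u y ^ (2:ℝ) = A j := by
      rw [hAdef]
      refine integral_congr_ae ?_
      filter_upwards [ae_restrict_mem measurableSet_Ioo] with y hy
      have h2n : u y ^ (2:ℝ) = u y ^ (2:ℕ) := by
        rw [show ((2:ℝ)) = ((2:ℕ):ℝ) by norm_num, Real.rpow_natCast]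
      rw [h2n, hudef]
      have hy0 : (0:ℝ) ≤ y := hy.1.le
      have hy1 : (0:ℝ) ≤ 1 - y := by linarith [hy.2]
      have e1 : (y ^ ((j:ℝ)/2))^2 = y^j := by
        rw [← Real.rpow_natCast (y ^ ((j:ℝ)/2)) 2, ← Real.rpow_mul hy0]
        norm_num
      have e2 : ((1-y) ^ ((1/4):ℝ))^2 = Real.sqrt (1-y) := by
        rw [← Real.rpow_natCast ((1-y) ^ ((1/4):ℝ)) 2, ← Real.rpow_mul hy1,
          Real.sqrt_eq_rpow]
        norm_num
      calc (‖f y‖ * (y ^ ((j:ℝ)/2) * (1-y) ^ ((1/4):ℝ)))^2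
          = ‖f y‖^2 * ((y ^ ((j:ℝ)/2))^2 * ((1-y) ^ ((1/4):ℝ))^2) := by ring
        _ = ‖f y‖^2 * (y^j * Real.sqrt (1-y)) := by rw [e1, e2]
    have h_vsq : ∫ y in Set.Ioo (0:ℝ) 1, v y ^ (2:ℝ) = B j := by
      rw [hBdef]
      refine integral_congr_ae ?_
      filter_upwards [hv_sq_eq] with y hy
      have h2n : v y ^ (2:ℝ) = v y ^ (2:ℕ) := by
        rw [show ((2:ℝ)) = ((2:ℕ):ℝ) by norm_num, Real.rpow_natCast]
      rw [h2n, ← hy]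
    rw [h_usq, h_vsq, h_uv] at hCS0
    have h1 : ‖∫ y in Set.Ioo (0 : ℝ) 1, f y * (y : ℂ) ^ j‖
        ≤ A j ^ ((1:ℝ)/2) * B j ^ ((1:ℝ)/2) := le_trans (hmom2 j) hCS0
    calc ‖∫ y in Set.Ioo (0 : ℝ) 1, f y * (y : ℂ) ^ j‖^2
        ≤ (A j ^ ((1:ℝ)/2) * B j ^ ((1:ℝ)/2))^2 :=
          pow_le_pow_left₀ (norm_nonneg _) h1 2
      _ = A j * B j := by
          rw [mul_pow, ← Real.rpow_natCast (A j ^ ((1:ℝ)/2)) 2, ← Real.rpow_mul (hA0 j),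
            ← Real.rpow_natCast (B j ^ ((1:ℝ)/2)) 2, ← Real.rpow_mul (hB0 j)]
          norm_num
  -- summing up
  have hwcont : ∀ j : ℕ, Continuous fun y : ℝ => y^j * Real.sqrt (1-y) := fun j =>
    (continuous_pow j).mul (Real.continuous_sqrt.comp (continuous_const.sub continuous_id))
  have hDint : ∀ j : ℕ, Integrable (fun y => ‖f y‖^2 * (y^j * Real.sqrt (1-y)))
      (volume.restrict (Set.Ioo (0 : ℝ) 1)) := by
    intro j
    refine Integrable.mono hnormsq
      (((hf.1.norm.aemeasurable.pow_const 2).mul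
        (hwcont j).measurable.aemeasurable).aestronglyMeasurable) ?_
    filter_upwards [ae_restrict_mem measurableSet_Ioo] with y hy
    have h1 : y^j ≤ 1 := pow_le_one₀ hy.1.le hy.2.le
    have h2 : Real.sqrt (1-y) ≤ 1 := Real.sqrt_le_one.mpr (by linarith [hy.1])
    have h3 : (0:ℝ) ≤ y^j := pow_nonneg hy.1.le j
    have h4 : (0:ℝ) ≤ Real.sqrt (1-y) := Real.sqrt_nonneg _
    rw [Real.norm_eq_abs, Real.norm_eq_abs, abs_of_nonneg (by positivity),
      abs_of_nonneg (sq_nonneg _)]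
    nlinarith [sq_nonneg ‖f y‖, mul_le_one₀ h1 h4 h2]
  have hpartial : ∀ n, ∑ j ∈ Finset.range n, A j * B j ≤ 12 * K2 := by
    intro n
    have step1 : ∑ j ∈ Finset.range n, A j * B j
        ≤ ∑ j ∈ Finset.range n, A j * (3 / Real.sqrt ((j:ℝ)+1)) :=
      Finset.sum_le_sum (fun j _ => mul_le_mul_of_nonneg_left (aux_B_bound j) (hA0 j))
    refine le_trans step1 ?_
    have step2 : ∀ j : ℕ, A j * (3 / Real.sqrt ((j:ℝ)+1))
        = ∫ y in Set.Ioo (0:ℝ) 1,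
            (‖f y‖^2 * (y^j * Real.sqrt (1-y))) * (3 / Real.sqrt ((j:ℝ)+1)) := by
      intro j; rw [hAdef]; exact (integral_mul_const _ _).symm
    calc ∑ j ∈ Finset.range n, A j * (3 / Real.sqrt ((j:ℝ)+1))
        = ∫ y in Set.Ioo (0:ℝ) 1, ∑ j ∈ Finset.range n,
            (‖f y‖^2 * (y^j * Real.sqrt (1-y))) * (3 / Real.sqrt ((j:ℝ)+1)) := by
          rw [integral_finset_sum (Finset.range n) (fun j _ => (hDint j).mul_const _)]
          exact Finset.sum_congr rfl (fun j _ => step2 j)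
      _ ≤ ∫ y in Set.Ioo (0:ℝ) 1, 12 * ‖f y‖^2 := by
          refine integral_mono_ae (integrable_finset_sum _ (fun j _ => (hDint j).mul_const _))
            (hnormsq.const_mul 12) ?_
          filter_upwards [ae_restrict_mem measurableSet_Ioo] with y hy
          have hy0 : (0:ℝ) < y := hy.1
          have hy1 : (0:ℝ) < 1 - y := by linarith [hy.2]
          have hsq1 : (0:ℝ) < Real.sqrt (1-y) := Real.sqrt_pos.2 hy1
          have hS : ∑ j ∈ Finset.range n, y^j / Real.sqrt ((j:ℝ)+1)
              ≤ 4 / Real.sqrt (1-y) :=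
            le_trans ((aux_S_summable hy0.le hy.2).sum_le_tsum (Finset.range n)
              (fun j _ => div_nonneg (pow_nonneg hy0.le j) (Real.sqrt_nonneg _))) (aux_S_bound hy0.le hy.2)
          have heq : ∑ j ∈ Finset.range n,
                (‖f y‖^2 * (y^j * Real.sqrt (1-y))) * (3 / Real.sqrt ((j:ℝ)+1))
              = (3 * ‖f y‖^2 * Real.sqrt (1-y))
                * ∑ j ∈ Finset.range n, y^j / Real.sqrt ((j:ℝ)+1) := by
            rw [Finset.mul_sum]
            refine Finset.sum_congr rfl (fun j _ => ?_)
            have hne : Real.sqrt ((j:ℝ)+1) ≠ 0 := by positivity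
            field_simp
          calc ∑ j ∈ Finset.range n,
                (‖f y‖^2 * (y^j * Real.sqrt (1-y))) * (3 / Real.sqrt ((j:ℝ)+1))
              = (3 * ‖f y‖^2 * Real.sqrt (1-y))
                * ∑ j ∈ Finset.range n, y^j / Real.sqrt ((j:ℝ)+1) := heq
            _ ≤ (3 * ‖f y‖^2 * Real.sqrt (1-y)) * (4 / Real.sqrt (1-y)) :=
                mul_le_mul_of_nonneg_left hS (by positivity)
            _ = 12 * ‖f y‖^2 := by field_simp; ring
      _ = 12 * K2 := by rw [MeasureTheory.integral_const_mul]
  have hsumsq : Summable (fun j : ℕ => ‖∫ y in Set.Ioo (0 : ℝ) 1, f y * (y : ℂ) ^ j‖^2) :=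
    summable_of_sum_range_le (fun j => sq_nonneg _)
      (fun n => le_trans (Finset.sum_le_sum (fun j _ => hCS j)) (hpartial n))
  refine ⟨?_, part2, part3, part4⟩
  refine memℓp_gen ?_
  have h2t : ((2:ℝ≥0∞)).toReal = ((2:ℕ):ℝ) := by simp
  rw [h2t]
  simp_rw [Real.rpow_natCast]
  exact hsumsq

end Main
end

section
/- Let μ be a finite positive Borel measure on ℝ with support contained in [−1, 1], and let w = (w_j)_{j∈ℕ} be strictly positive weights with ∑_{j∈ℕ} 1/w_j < ∞. Then for every φ ∈ L²(μ) and every x ∈ [−1, 1]: the series ∑_{k=0}^∞ (1/w_k)·(∫ y^k φ(y) dμ(y))·x^k converges absolutely, the kernel k(x,y) = ∑_{k=0}^∞ (x·y)^k / w_k converges for all y ∈ [−1,1], the function y ↦ φ(y)·k(x,y) is μ-integrable, and ∑_{k=0}^∞ (1/w_k) (∫ y^k φ(y) dμ(y)) x^k = ∫ φ(y) (∑_{k=0}^∞ (xy)^k / w_k) dμ(y). That is, FF*_w is the integral operator on L²(μ) with kernel k(x,y) = ∑_k (xy)^k/w_k. -/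
open MeasureTheory

set_option maxHeartbeats 1000000

/-- **`FF*_w` is an integral operator.** For a finite measure `μ` supported in
`[-1,1]`, strictly positive weights `w` with `∑ 1/w_k < ∞`, `φ ∈ L²(μ)` and
`x ∈ [-1,1]`: the series `∑ₖ (1/wₖ)(∫ y^k φ dμ) x^k` converges absolutely, the
kernel `k(x,y) = ∑ₖ (xy)^k/wₖ` converges for `y ∈ [-1,1]`, `y ↦ φ(y) k(x,y)` is
`μ`-integrable, and `∑ₖ (1/wₖ)(∫ y^k φ dμ) x^k = ∫ φ(y) k(x,y) dμ(y)`. -/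
theorem FFstar_weighted_integral_operator (μ : Measure ℝ) [IsFiniteMeasure μ]
    (hsupp : μ (Set.Icc (-1 : ℝ) 1)ᶜ = 0)
    (w : ℕ → ℝ) (hw : ∀ k, 0 < w k) (hws : Summable fun k : ℕ => 1 / w k)
    (φ : ℝ → ℝ) (hφ : MemLp φ 2 μ) (x : ℝ) (hx : x ∈ Set.Icc (-1 : ℝ) 1) :
    Summable (fun k : ℕ => |(1 / w k) * (∫ y, y ^ k * φ y ∂μ) * x ^ k|) ∧
    (∀ y ∈ Set.Icc (-1 : ℝ) 1, Summable fun k : ℕ => (x * y) ^ k / w k) ∧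
    Integrable (fun y => φ y * ∑' k : ℕ, (x * y) ^ k / w k) μ ∧
    ∑' k : ℕ, (1 / w k) * (∫ y, y ^ k * φ y ∂μ) * x ^ k =
      ∫ y, φ y * ∑' k : ℕ, (x * y) ^ k / w k ∂μ := by
  have hxabs : |x| ≤ 1 := abs_le.mpr ⟨hx.1, hx.2⟩
  have hae : ∀ᵐ y ∂μ, y ∈ Set.Icc (-1 : ℝ) 1 := by
    rw [ae_iff]
    exact hsupp
  have hφint : Integrable φ μ := hφ.integrable one_le_two
  -- pointwise bound on kernel terms
  have hterm : ∀ y ∈ Set.Icc (-1 : ℝ) 1, ∀ k : ℕ, |(x * y) ^ k / w k| ≤ 1 / w k := by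
    intro y hy k
    have hyabs : |y| ≤ 1 := abs_le.mpr ⟨hy.1, hy.2⟩
    have hxy : |x * y| ≤ 1 := by
      rw [abs_mul]
      exact mul_le_one₀ hxabs (abs_nonneg _) hyabs
    rw [abs_div, abs_pow, abs_of_pos (hw k)]
    gcongr
    exacts [(hw k).le, pow_le_one₀ (abs_nonneg _) hxy]
  -- kernel summability
  have hker : ∀ y ∈ Set.Icc (-1 : ℝ) 1, Summable fun k : ℕ => (x * y) ^ k / w k := by
    intro y hy
    exact Summable.of_abs (Summable.of_nonneg_of_le (fun k => abs_nonneg _) (hterm y hy) hws)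
  -- integrability of y ↦ y^k * φ y
  have hykφ : ∀ k : ℕ, Integrable (fun y => y ^ k * φ y) μ := by
    intro k
    refine hφint.norm.mono' ((measurable_id.pow_const k).aestronglyMeasurable.mul hφ.1) ?_
    filter_upwards [hae] with y hy
    have hyabs : |y| ≤ 1 := abs_le.mpr ⟨hy.1, hy.2⟩
    rw [norm_mul, Real.norm_eq_abs, Real.norm_eq_abs, abs_pow]
    calc |y| ^ k * |φ y| ≤ 1 * |φ y| := by
          gcongr
          exact pow_le_one₀ (abs_nonneg _) hyabs
      _ = |φ y| := one_mul _
  -- bound on |∫ y^k φ|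
  have hIbound : ∀ k : ℕ, |∫ y, y ^ k * φ y ∂μ| ≤ ∫ y, |φ y| ∂μ := by
    intro k
    have h0 : |∫ y, y ^ k * φ y ∂μ| ≤ ∫ y, |y ^ k * φ y| ∂μ := by
      simpa only [Real.norm_eq_abs] using norm_integral_le_integral_norm (μ := μ)
        (fun y => y ^ k * φ y)
    refine h0.trans ?_
    refine integral_mono_ae (hykφ k).abs hφint.abs ?_
    filter_upwards [hae] with y hy
    have hyabs : |y| ≤ 1 := abs_le.mpr ⟨hy.1, hy.2⟩
    rw [abs_mul, abs_pow]
    calc |y| ^ k * |φ y| ≤ 1 * |φ y| := by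
          gcongr
          exact pow_le_one₀ (abs_nonneg _) hyabs
      _ = |φ y| := one_mul _
  have hφabs_nonneg : (0 : ℝ) ≤ ∫ y, |φ y| ∂μ := integral_nonneg fun y => abs_nonneg _
  -- Part 1: summability
  have part1 : Summable (fun k : ℕ => |(1 / w k) * (∫ y, y ^ k * φ y ∂μ) * x ^ k|) := by
    refine Summable.of_nonneg_of_le (fun k => abs_nonneg _) ?_ (hws.mul_right (∫ y, |φ y| ∂μ))
    intro k
    rw [abs_mul, abs_mul, abs_div, abs_one, abs_of_pos (hw k), abs_pow]
    have h1 : |∫ y, y ^ k * φ y ∂μ| * |x| ^ k ≤ (∫ y, |φ y| ∂μ) * 1 :=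
      mul_le_mul (hIbound k) (pow_le_one₀ (abs_nonneg _) hxabs) (by positivity) hφabs_nonneg
    calc 1 / w k * |∫ y, y ^ k * φ y ∂μ| * |x| ^ k
        = 1 / w k * (|∫ y, y ^ k * φ y ∂μ| * |x| ^ k) := by ring
      _ ≤ 1 / w k * ((∫ y, |φ y| ∂μ) * 1) :=
          mul_le_mul_of_nonneg_left h1 (div_nonneg zero_le_one (hw k).le)
      _ = 1 / w k * ∫ y, |φ y| ∂μ := by ring
  -- the family F
  set F : ℕ → ℝ → ℝ := fun k y => φ y * ((x * y) ^ k / w k) with hF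
  have hFmeas : ∀ k : ℕ, AEStronglyMeasurable (F k) μ := fun k =>
    hφ.1.mul ((measurable_const.mul measurable_id).pow_const k |>.div_const (w k)
      |>.aestronglyMeasurable)
  have hFint : ∀ k, Integrable (F k) μ := by
    intro k
    refine (hφint.norm.const_mul (1 / w k)).mono' (hFmeas k) ?_
    filter_upwards [hae] with y hy
    rw [Real.norm_eq_abs, hF]
    calc |φ y * ((x * y) ^ k / w k)| = |φ y| * |(x * y) ^ k / w k| := abs_mul _ _
      _ ≤ |φ y| * (1 / w k) := by
          gcongr
          exact hterm y hy k
      _ = 1 / w k * ‖φ y‖ := by rw [Real.norm_eq_abs]; ring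
  have hFnorm : Summable fun k : ℕ => ∫ y, ‖F k y‖ ∂μ := by
    refine Summable.of_nonneg_of_le (fun k => integral_nonneg fun y => norm_nonneg _) ?_
      (hws.mul_right (∫ y, |φ y| ∂μ))
    intro k
    have : ∫ y, ‖F k y‖ ∂μ ≤ ∫ y, 1 / w k * |φ y| ∂μ := by
      refine integral_mono_ae (hFint k).norm (hφint.abs.const_mul _) ?_
      filter_upwards [hae] with y hy
      rw [Real.norm_eq_abs, hF]
      calc |φ y * ((x * y) ^ k / w k)| = |φ y| * |(x * y) ^ k / w k| := abs_mul _ _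
        _ ≤ |φ y| * (1 / w k) := by gcongr; exact hterm y hy k
        _ = 1 / w k * |φ y| := mul_comm _ _
    simpa [integral_const_mul] using this
  -- pointwise identity: φ y * kernel = ∑' F k y
  have hpt : ∀ y : ℝ, φ y * ∑' k : ℕ, (x * y) ^ k / w k = ∑' k : ℕ, F k y := by
    intro y
    rw [hF, tsum_mul_left]
  -- Part 3: integrability of the product
  have part3 : Integrable (fun y => φ y * ∑' k : ℕ, (x * y) ^ k / w k) μ := by
    have hmeas : AEStronglyMeasurable (fun y => φ y * ∑' k : ℕ, (x * y) ^ k / w k) μ := by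
      refine aestronglyMeasurable_of_tendsto_ae Filter.atTop
        (f := fun n y => ∑ k ∈ Finset.range n, F k y) (fun n =>
          Finset.aestronglyMeasurable_fun_sum _ fun k _ => hFmeas k) ?_
      filter_upwards [hae] with y hy
      rw [hpt y]
      have hsum : Summable fun k : ℕ => F k y := by
        rw [hF]
        exact (hker y hy).mul_left (φ y)
      exact hsum.hasSum.tendsto_sum_nat
    refine ((hφint.abs.const_mul (∑' k : ℕ, 1 / w k)).mono' hmeas ?_)
    filter_upwards [hae] with y hy
    rw [Real.norm_eq_abs, abs_mul]
    have hsumabs : Summable fun k : ℕ => |(x * y) ^ k / w k| :=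
      Summable.of_nonneg_of_le (fun k => abs_nonneg _) (hterm y hy) hws
    have hkabs : |∑' k : ℕ, (x * y) ^ k / w k| ≤ ∑' k : ℕ, 1 / w k := by
      have h2 : |∑' k : ℕ, (x * y) ^ k / w k| ≤ ∑' k : ℕ, |(x * y) ^ k / w k| := by
        have := norm_tsum_le_tsum_norm (f := fun k : ℕ => (x * y) ^ k / w k)
          (by simpa only [Real.norm_eq_abs] using hsumabs)
        simpa only [Real.norm_eq_abs] using this
      exact h2.trans (Summable.tsum_le_tsum (hterm y hy) hsumabs hws)
    calc |φ y| * |∑' k : ℕ, (x * y) ^ k / w k| ≤ |φ y| * ∑' k : ℕ, 1 / w k :=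
          mul_le_mul_of_nonneg_left hkabs (abs_nonneg _)
      _ = (∑' k : ℕ, 1 / w k) * |φ y| := mul_comm _ _
  -- individual integrals
  have hkey : ∀ k : ℕ, ∫ y, F k y ∂μ = (1 / w k) * (∫ y, y ^ k * φ y ∂μ) * x ^ k := by
    intro k
    have : F k = fun y => (1 / w k * x ^ k) * (y ^ k * φ y) := by
      funext y
      show φ y * ((x * y) ^ k / w k) = 1 / w k * x ^ k * (y ^ k * φ y)
      ring
    rw [this, integral_const_mul]
    ring
  -- Part 4: the equality
  have part4 : ∑' k : ℕ, (1 / w k) * (∫ y, y ^ k * φ y ∂μ) * x ^ k =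
      ∫ y, φ y * ∑' k : ℕ, (x * y) ^ k / w k ∂μ := by
    have := integral_tsum_of_summable_integral_norm hFint hFnorm
    calc ∑' k : ℕ, (1 / w k) * (∫ y, y ^ k * φ y ∂μ) * x ^ k
        = ∑' k : ℕ, ∫ y, F k y ∂μ := by
          exact tsum_congr fun k => (hkey k).symm
      _ = ∫ y, ∑' k : ℕ, F k y ∂μ := this
      _ = ∫ y, φ y * ∑' k : ℕ, (x * y) ^ k / w k ∂μ := by
          refine integral_congr_ae (Filter.Eventually.of_forall fun y => ?_)
          exact (hpt y).symm
  exact ⟨part1, hker, part3, part4⟩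
end

section
/- Let t > 1 and let μ be the positive Borel measure on ℝ given by dμ(x) = B(x) dx, where B is a nonnegative, essentially bounded measurable function vanishing outside [−t, t]. Then for every φ ∈ L²(μ): ∑_{k=0}^∞ t^{−2k} · |∫_{−t}^{t} x^k φ(x) B(x) dx|² ≤ t·π·‖B‖_∞ · ∫_{−t}^{t} |φ(x)|² B(x) dx. Consequently, with weights w_k = t^{2k}, the operators F, F*_w, F*_w F and F F*_w are all bounded, with ‖F F*_w‖ = ‖F*_w F‖ ≤ t·π·‖B‖_∞. -/
open MeasureTheory Real Set Finset

namespace WMOB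

noncomputable def a (j : ℕ) : ℝ := ∏ i ∈ Finset.range j, (2 * (i : ℝ) + 1) / (2 * i + 2)

lemma a_nonneg (j : ℕ) : 0 ≤ a j :=
  Finset.prod_nonneg fun i _ => by positivity

lemma a_zero : a 0 = 1 := by simp [a]

lemma a_rec (j : ℕ) : a j * (2 * (j : ℝ) + 1) = a (j + 1) * (2 * j + 2) := by
  have h : a (j + 1) = a j * ((2 * (j : ℝ) + 1) / (2 * j + 2)) := Finset.prod_range_succ _ _
  rw [h]
  have h2 : (2 * (j : ℝ) + 2) ≠ 0 := by positivity
  field_simp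

lemma deriv_identity (J : ℕ) (u : ℝ) :
    2 * (1 - u) * (∑ j ∈ Finset.range (J + 1), a j * ((j : ℝ) * u ^ (j - 1))) =
      (∑ j ∈ Finset.range (J + 1), a j * u ^ j) - (2 * J + 1) * a J * u ^ J := by
  induction J with
  | zero => simp [a_zero]
  | succ J ih =>
    rw [Finset.sum_range_succ, Finset.sum_range_succ (f := fun j => a j * u ^ j)]
    have hs : (J + 1 : ℕ) - 1 = J := by omega
    rw [hs]
    push_cast
    have := a_rec J
    linear_combination ih - u ^ J * this

lemma sum_a_le (M : ℕ) {s : ℝ} (h0 : 0 ≤ s) (h1 : s < 1) :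
    ∑ j ∈ Finset.range M, a j * s ^ j ≤ 1 / Real.sqrt (1 - s) := by
  have hsq : 0 < Real.sqrt (1 - s) := Real.sqrt_pos.2 (by linarith)
  cases M with
  | zero =>
    simp only [Finset.range_zero, Finset.sum_empty]
    positivity
  | succ J =>
    set T : ℝ → ℝ := fun u => ∑ j ∈ Finset.range (J + 1), a j * u ^ j with hTdef
    set D : ℝ → ℝ := fun u => ∑ j ∈ Finset.range (J + 1), a j * ((j : ℝ) * u ^ (j - 1)) with hDdef
    have hT : ∀ u : ℝ, HasDerivAt T (D u) u := by
      intro u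
      exact HasDerivAt.fun_sum fun j _ => (hasDerivAt_pow j u).const_mul (a j)
    have hTnonneg : ∀ u : ℝ, 0 ≤ u → 0 ≤ T u := fun u hu =>
      Finset.sum_nonneg fun j _ => mul_nonneg (a_nonneg j) (pow_nonneg hu j)
    set Q : ℝ → ℝ := fun u => (1 - u) * T u ^ 2 with hQdef
    have hQ : ∀ u : ℝ, HasDerivAt Q (-(T u ^ 2) + (1 - u) * (2 * T u * D u)) u := by
      intro u
      have h1 : HasDerivAt (fun u : ℝ => 1 - u) (-1) u := by
        simpa using (hasDerivAt_id u).const_sub 1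
      have h2 : HasDerivAt (fun u => T u ^ 2) (2 * T u * D u) u := by
        have := (hT u).fun_pow 2
        simpa [mul_comm, mul_assoc, mul_left_comm] using this
      have : HasDerivAt (fun u => (1 - u) * T u ^ 2)
          (-1 * T u ^ 2 + (1 - u) * (2 * T u * D u)) u := h1.fun_mul h2
      convert this using 1
      ring
    have hmono : AntitoneOn Q (Set.Icc 0 s) := by
      apply antitoneOn_of_deriv_nonpos (convex_Icc 0 s)
      · exact fun u _ => (hQ u).continuousAt.continuousWithinAt
      · exact fun u _ => ((hQ u).differentiableAt.differentiableWithinAt)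
      · intro u hu
        rw [interior_Icc] at hu
        rw [(hQ u).deriv]
        have hid := deriv_identity J u
        have hTu : 0 ≤ T u := hTnonneg u hu.1.le
        have : -(T u ^ 2) + (1 - u) * (2 * T u * D u) =
            T u * (2 * (1 - u) * D u) - T u ^ 2 := by ring
        rw [this, hid]
        have h1 : T u * ((∑ j ∈ Finset.range (J + 1), a j * u ^ j)
            - (2 * J + 1) * a J * u ^ J) = T u ^ 2 - T u * ((2 * J + 1) * a J * u ^ J) := by
          rw [hTdef]; ring
        rw [h1]
        have : 0 ≤ T u * ((2 * J + 1) * a J * u ^ J) := by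
          apply mul_nonneg hTu
          apply mul_nonneg (mul_nonneg (by positivity) (a_nonneg J)) (pow_nonneg hu.1.le J)
        linarith
    have hQs : Q s ≤ Q 0 := hmono (Set.left_mem_Icc.2 h0) ⟨h0, le_refl s⟩ h0
    have hQ0 : Q 0 = 1 := by
      have hT0 : T 0 = 1 := by
        show (∑ j ∈ Finset.range (J + 1), a j * (0:ℝ) ^ j) = 1
        rw [Finset.sum_eq_single 0]
        · simp [a_zero]
        · intro j _ hj
          simp [zero_pow hj]
        · simp
      simp [hQdef, hT0]
    have key : (1 - s) * T s ^ 2 ≤ 1 := hQs.trans hQ0.le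
    have hTs : 0 ≤ T s := hTnonneg s h0
    have h2 : T s * Real.sqrt (1 - s) ≤ 1 := by
      nlinarith [Real.sq_sqrt (by linarith : (0:ℝ) ≤ 1 - s), Real.sqrt_nonneg (1 - s),
        mul_nonneg hTs (Real.sqrt_nonneg (1 - s))]
    show T s ≤ 1 / Real.sqrt (1 - s)
    rw [le_div_iff₀ hsq]
    exact h2

lemma sum_range_two_mul (f : ℕ → ℝ) (n : ℕ) :
    ∑ k ∈ Finset.range (2 * n), f k = ∑ j ∈ Finset.range n, (f (2 * j) + f (2 * j + 1)) := by
  induction n with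
  | zero => simp
  | succ n ih =>
    have : 2 * (n + 1) = 2 * n + 1 + 1 := by ring
    rw [this, Finset.sum_range_succ, Finset.sum_range_succ, ih, Finset.sum_range_succ]
    ring

noncomputable def w (k : ℕ) : ℝ := ∫ θ in Set.Ioo 0 π, Real.cos θ ^ k

lemma w_eq_interval (k : ℕ) : w k = ∫ θ in (0:ℝ)..π, Real.cos θ ^ k := by
  show (∫ θ in Set.Ioo 0 π, Real.cos θ ^ k) = _
  rw [intervalIntegral.integral_of_le Real.pi_pos.le, integral_Ioc_eq_integral_Ioo]

lemma cos_pow_step (k : ℕ) :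
    (∫ θ in (0:ℝ)..π, Real.cos θ ^ (k + 2)) =
      ((k : ℝ) + 1) / ((k : ℝ) + 2) * ∫ θ in (0:ℝ)..π, Real.cos θ ^ k := by
  rw [integral_cos_pow k]
  simp [Real.sin_pi, Real.sin_zero]

lemma w_even (j : ℕ) : w (2 * j) = π * a j := by
  induction j with
  | zero => simp [w_eq_interval, a_zero]
  | succ j ih =>
    have h : 2 * (j + 1) = 2 * j + 2 := by ring
    rw [h, w_eq_interval, cos_pow_step, ← w_eq_interval, ih]
    have := a_rec j
    have h2 : (2 * (j:ℝ) + 2) ≠ 0 := by positivity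
    push_cast
    rw [div_mul_eq_mul_div, div_eq_iff (by positivity : (2*(j:ℝ)+2) ≠ 0)]
    linear_combination π * this

lemma w_odd (j : ℕ) : w (2 * j + 1) = 0 := by
  induction j with
  | zero => simp [w_eq_interval]
  | succ j ih =>
    have h : 2 * (j + 1) + 1 = (2 * j + 1) + 2 := by ring
    rw [h, w_eq_interval, cos_pow_step, ← w_eq_interval, ih, mul_zero]

lemma w_nonneg (k : ℕ) : 0 ≤ w k := by
  rcases Nat.even_or_odd k with ⟨j, hj⟩ | ⟨j, hj⟩
  · rw [hj, ← two_mul, w_even]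
    exact mul_nonneg Real.pi_pos.le (a_nonneg j)
  · rw [hj, w_odd]

lemma image_cos {t : ℝ} (ht : 0 < t) :
    (fun θ : ℝ => t * Real.cos θ) '' Set.Ioo 0 π = Set.Ioo (-t) t := by
  ext y
  constructor
  · rintro ⟨θ, hθ, rfl⟩
    have h1 : Real.cos θ < Real.cos 0 :=
      Real.strictAntiOn_cos ⟨le_refl 0, Real.pi_pos.le⟩ ⟨hθ.1.le, hθ.2.le⟩ hθ.1
    have h2 : Real.cos π < Real.cos θ :=
      Real.strictAntiOn_cos ⟨hθ.1.le, hθ.2.le⟩ ⟨Real.pi_pos.le, le_refl π⟩ hθ.2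
    rw [Real.cos_zero] at h1; rw [Real.cos_pi] at h2
    constructor <;> simp only <;> nlinarith
  · rintro ⟨h1, h2⟩
    have hd1 : y / t < 1 := by rw [div_lt_one ht]; exact h2
    have hd2 : -1 < y / t := by rw [lt_div_iff₀ ht]; linarith
    refine ⟨Real.arccos (y / t), ⟨?_, ?_⟩, ?_⟩
    · exact Real.arccos_pos.2 hd1
    · have := Real.neg_pi_div_two_lt_arcsin.2 hd2
      rw [Real.arccos]
      linarith
    · simp only
      rw [Real.cos_arccos hd2.le hd1.le]
      field_simp

lemma cos_hasDeriv {t : ℝ} :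
    ∀ θ ∈ Set.Ioo 0 π, HasDerivWithinAt (fun θ : ℝ => t * Real.cos θ)
      (-(t * Real.sin θ)) (Set.Ioo 0 π) θ := by
  intro θ _
  have := (Real.hasDerivAt_cos θ).const_mul t
  simpa [mul_comm, neg_mul, mul_neg] using this.hasDerivWithinAt

lemma cos_injOn {t : ℝ} (ht : 0 < t) :
    Set.InjOn (fun θ : ℝ => t * Real.cos θ) (Set.Ioo 0 π) := by
  intro x hx y hy hxy
  exact Real.injOn_cos (Set.Ioo_subset_Icc_self hx) (Set.Ioo_subset_Icc_self hy)
    (mul_left_cancel₀ (ne_of_gt ht) hxy)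

lemma cv_integrand_eq {t : ℝ} (ht : 0 < t) (k : ℕ) :
    ∀ θ ∈ Set.Ioo 0 π,
      |(-(t * Real.sin θ))| • ((t * Real.cos θ) ^ k *
        (Real.sqrt (t ^ 2 - (t * Real.cos θ) ^ 2))⁻¹) = t ^ k * Real.cos θ ^ k := by
  intro θ hθ
  have hsin : 0 < Real.sin θ := Real.sin_pos_of_pos_of_lt_pi hθ.1 hθ.2
  have hts : 0 < t * Real.sin θ := mul_pos ht hsin
  have hsq : t ^ 2 - (t * Real.cos θ) ^ 2 = (t * Real.sin θ) ^ 2 := by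
    nlinarith [Real.sin_sq_add_cos_sq θ]
  rw [hsq, Real.sqrt_sq hts.le, abs_neg, abs_of_pos hts, smul_eq_mul, mul_pow]
  field_simp

lemma moment_cv {t : ℝ} (ht : 0 < t) (k : ℕ) :
    ∫ y in Set.Ioo (-t) t, y ^ k * (Real.sqrt (t ^ 2 - y ^ 2))⁻¹ =
      t ^ k * ∫ θ in Set.Ioo 0 π, Real.cos θ ^ k := by
  have := integral_image_eq_integral_abs_deriv_smul measurableSet_Ioo (cos_hasDeriv (t := t))
    (cos_injOn ht) (fun y => y ^ k * (Real.sqrt (t ^ 2 - y ^ 2))⁻¹)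
  rw [image_cos ht] at this
  rw [this, setIntegral_congr_fun measurableSet_Ioo (cv_integrand_eq ht k)]
  exact integral_const_mul _ _

lemma p_integrable {t : ℝ} (ht : 0 < t) :
    IntegrableOn (fun y : ℝ => (Real.sqrt (t ^ 2 - y ^ 2))⁻¹) (Set.Ioo (-t) t) := by
  rw [← image_cos ht,
    integrableOn_image_iff_integrableOn_abs_deriv_smul measurableSet_Ioo
      (cos_hasDeriv (t := t)) (cos_injOn ht)]
  have hone : IntegrableOn (fun _ : ℝ => (1 : ℝ)) (Set.Ioo 0 π) :=
    integrableOn_const measure_Ioo_lt_top.ne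
  apply hone.congr_fun ?_ measurableSet_Ioo
  intro θ hθ
  have h := cv_integrand_eq ht 0 θ hθ
  simpa using h.symm

lemma p_measurable {t : ℝ} : Measurable (fun y : ℝ => (Real.sqrt (t ^ 2 - y ^ 2))⁻¹) := by
  have : Continuous fun y : ℝ => Real.sqrt (t ^ 2 - y ^ 2) :=
    Real.continuous_sqrt.comp (by continuity)
  exact this.measurable.inv

lemma yk_p_integrable {t : ℝ} (ht : 0 < t) (k : ℕ) :
    IntegrableOn (fun y : ℝ => y ^ k * (Real.sqrt (t ^ 2 - y ^ 2))⁻¹) (Set.Ioo (-t) t) := by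
  apply Integrable.mono' ((p_integrable ht).const_mul (t ^ k))
  · exact ((measurable_id.pow_const k).mul p_measurable).aestronglyMeasurable
  · rw [ae_restrict_iff' measurableSet_Ioo]
    filter_upwards with y hy
    have h1 : |y| ≤ t := (abs_lt.2 ⟨hy.1, hy.2⟩).le
    have h0 : (0:ℝ) ≤ (Real.sqrt (t ^ 2 - y ^ 2))⁻¹ := by positivity
    rw [Real.norm_eq_abs, abs_mul, abs_pow, abs_of_nonneg h0]
    exact mul_le_mul_of_nonneg_right (pow_le_pow_left₀ (abs_nonneg y) h1 k) h0

lemma jpoly_bound {t : ℝ} (ht : 0 < t) {x : ℝ} (hx : x ∈ Set.Ioo (-t) t) (n : ℕ) :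
    ∑ k ∈ Finset.range n, (x / t) ^ k * w k ≤ π * (t * (Real.sqrt (t ^ 2 - x ^ 2))⁻¹) := by
  have hxt : |x / t| < 1 := by
    rw [abs_div, abs_of_pos ht, div_lt_one ht]; exact abs_lt.2 ⟨hx.1, hx.2⟩
  have hs0 : (0:ℝ) ≤ (x / t) ^ 2 := sq_nonneg _
  have hs1 : (x / t) ^ 2 < 1 := by
    exact (sq_lt_one_iff_abs_lt_one _).2 hxt
  have hterm : ∀ k, 0 ≤ (x / t) ^ k * w k := by
    intro k
    rcases Nat.even_or_odd k with ⟨j, hj⟩ | ⟨j, hj⟩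
    · subst hj
      have : (x / t) ^ (j + j) = ((x / t) ^ j) ^ 2 := by rw [← pow_mul]; ring_nf
      rw [this]
      exact mul_nonneg (sq_nonneg _) (w_nonneg _)
    · rw [hj, w_odd]; simp
  have hsub : Finset.range n ⊆ Finset.range (2 * n) := by
    apply Finset.range_subset_range.2; omega
  calc ∑ k ∈ Finset.range n, (x / t) ^ k * w k
      ≤ ∑ k ∈ Finset.range (2 * n), (x / t) ^ k * w k :=
        Finset.sum_le_sum_of_subset_of_nonneg hsub (fun k _ _ => hterm k)
    _ = π * ∑ j ∈ Finset.range n, a j * ((x / t) ^ 2) ^ j := by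
        rw [sum_range_two_mul, Finset.mul_sum]
        apply Finset.sum_congr rfl
        intro j _
        rw [w_odd, w_even, pow_mul]
        ring
    _ ≤ π * (1 / Real.sqrt (1 - (x / t) ^ 2)) := by
        apply mul_le_mul_of_nonneg_left (sum_a_le n hs0 hs1) Real.pi_pos.le
    _ = π * (t * (Real.sqrt (t ^ 2 - x ^ 2))⁻¹) := by
        congr 1
        have hpos : 0 < t ^ 2 - x ^ 2 := by nlinarith [sq_lt_sq' hx.1 hx.2]
        have h1 : 1 - (x / t) ^ 2 = (t ^ 2 - x ^ 2) / t ^ 2 := by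
          field_simp
        rw [h1, Real.sqrt_div hpos.le, Real.sqrt_sq ht.le]
        have h2 : 0 < Real.sqrt (t ^ 2 - x ^ 2) := Real.sqrt_pos.2 hpos
        field_simp

lemma geom_nonneg {r : ℝ} (h1 : -1 ≤ r) (h2 : r ≤ 1) (n : ℕ) :
    0 ≤ ∑ k ∈ Finset.range n, r ^ k := by
  rcases le_or_gt 0 r with hr | hr
  · exact Finset.sum_nonneg fun k _ => pow_nonneg hr k
  · have hr1 : r ≠ 1 := by linarith
    rw [geom_sum_eq hr1]
    apply div_nonneg_of_nonpos
    · have : r ^ n ≤ 1 := by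
        calc r ^ n ≤ |r ^ n| := le_abs_self _
          _ = |r| ^ n := abs_pow r n
          _ ≤ 1 := pow_le_one₀ (abs_nonneg r) (abs_le.2 ⟨h1, h2⟩)
      linarith
    · linarith

lemma abs_geom_le {r : ℝ} (h : |r| ≤ 1) (n : ℕ) :
    |∑ k ∈ Finset.range n, r ^ k| ≤ (n : ℝ) := by
  calc |∑ k ∈ Finset.range n, r ^ k| ≤ ∑ k ∈ Finset.range n, |r ^ k| :=
        Finset.abs_sum_le_sum_abs _ _
    _ ≤ ∑ k ∈ Finset.range n, 1 := by
        apply Finset.sum_le_sum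
        intro k _
        rw [abs_pow]
        exact pow_le_one₀ (abs_nonneg r) h
    _ = (n : ℝ) := by simp

end WMOB

open WMOB

set_option maxHeartbeats 1000000

/-- **Boundedness of the weighted moment operator for `dμ = B(x) dx`.** Let `t > 1`,
let `B` be a nonnegative measurable function vanishing outside `[-t,t]` and
essentially bounded by `C`, and `dμ = B dx`.  Then for every `φ ∈ L²(μ)`,
`∑ₖ t^{-2k} |∫ x^k φ B dx|² ≤ t π ‖B‖_∞ ∫ |φ|² B dx`; i.e. `F`, `F*_w`, `F*_w F`
and `F F*_w` are bounded for the weights `w_k = t^{2k}`, with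
`‖F F*_w‖ = ‖F*_w F‖ ≤ t π ‖B‖_∞`. -/
theorem weighted_moment_operator_bounded (t : ℝ) (ht : 1 < t)
    (B : ℝ → ℝ) (hBmeas : Measurable B) (hBnonneg : ∀ x, 0 ≤ B x)
    (hBsupp : ∀ x, x ∉ Set.Icc (-t) t → B x = 0)
    (C : ℝ) (hC : ∀ᵐ x ∂(volume : Measure ℝ), B x ≤ C)
    (φ : ℝ → ℝ)
    (hφ : MemLp φ 2 (volume.withDensity fun x => ENNReal.ofReal (B x))) :
    Summable (fun k : ℕ => (1 / t ^ (2 * k)) * (∫ x, x ^ k * φ x * B x) ^ 2) ∧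
    ∑' k : ℕ, (1 / t ^ (2 * k)) * (∫ x, x ^ k * φ x * B x) ^ 2 ≤
      t * Real.pi * C * ∫ x, φ x ^ 2 * B x := by
  classical
  have ht0 : (0:ℝ) < t := lt_trans one_pos ht
  have hπ : (0:ℝ) < π := Real.pi_pos
  have hBm' : Measurable fun x => ENNReal.ofReal (B x) := hBmeas.ennreal_ofReal
  have hsm := hφ.1
  set g : ℝ → ℝ := hsm.mk φ with hgdef
  have hgm : StronglyMeasurable g := hsm.stronglyMeasurable_mk
  have hae0 : ∀ᵐ x ∂(volume : Measure ℝ), ENNReal.ofReal (B x) ≠ 0 → φ x = g x :=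
    (ae_withDensity_iff hBm').1 hsm.ae_eq_mk
  have hBpos : ∀ x : ℝ, B x ≠ 0 → ENNReal.ofReal (B x) ≠ 0 := by
    intro x hx
    simp only [ne_eq, ENNReal.ofReal_eq_zero, not_le]
    exact lt_of_le_of_ne (hBnonneg x) (Ne.symm hx)
  set ψ : ℝ → ℝ := fun x => g x * B x with hψdef
  have hψm : Measurable ψ := hgm.measurable.mul hBmeas
  have hψeq : ∀ᵐ x ∂(volume : Measure ℝ), φ x * B x = ψ x := by
    filter_upwards [hae0] with x hx
    by_cases hB : B x = 0
    · simp [hψdef, hB]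
    · show φ x * B x = g x * B x
      rw [hx (hBpos x hB)]
  have hψeq2 : ∀ᵐ x ∂(volume : Measure ℝ), φ x ^ 2 * B x = g x ^ 2 * B x := by
    filter_upwards [hae0] with x hx
    by_cases hB : B x = 0
    · simp [hB]
    · rw [hx (hBpos x hB)]
  have hck : ∀ k : ℕ, (∫ x, x ^ k * φ x * B x) = ∫ x, x ^ k * ψ x := by
    intro k
    apply integral_congr_ae
    filter_upwards [hψeq] with x hx
    rw [mul_assoc, hx]
  have hIeq : (∫ x, φ x ^ 2 * B x) = ∫ x, g x ^ 2 * B x :=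
    integral_congr_ae hψeq2
  -- integrability facts
  have h2 : Integrable (fun x => φ x ^ 2 * B x) volume := by
    have h2' : Integrable (fun x => φ x ^ 2)
        (volume.withDensity fun x => ENNReal.ofReal (B x)) := hφ.integrable_sq
    rw [integrable_withDensity_iff hBm' (ae_of_all _ fun x => ENNReal.ofReal_lt_top)] at h2'
    apply h2'.congr (ae_of_all _ fun x => ?_)
    show φ x ^ 2 * (ENNReal.ofReal (B x)).toReal = φ x ^ 2 * B x
    rw [ENNReal.toReal_ofReal (hBnonneg x)]
  have hg2 : Integrable (fun x => g x ^ 2 * B x) volume := h2.congr hψeq2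
  have hψsq : Integrable (fun x => ψ x ^ 2) volume := by
    apply Integrable.mono' (hg2.const_mul C)
    · exact (hψm.pow_const 2).aestronglyMeasurable
    · filter_upwards [hC] with x hx
      have h0 : (0:ℝ) ≤ g x ^ 2 * B x := mul_nonneg (sq_nonneg _) (hBnonneg x)
      have : ψ x ^ 2 = (g x ^ 2 * B x) * B x := by rw [hψdef]; ring
      rw [Real.norm_eq_abs, abs_of_nonneg (sq_nonneg _), this]
      calc (g x ^ 2 * B x) * B x ≤ (g x ^ 2 * B x) * C := by
            exact mul_le_mul_of_nonneg_left hx h0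
        _ = C * (g x ^ 2 * B x) := by ring
  have hsupp : ∀ x, x ∉ Set.Icc (-t) t → ψ x = 0 := by
    intro x hx
    show g x * B x = 0
    rw [hBsupp x hx, mul_zero]
  have hψint : Integrable ψ volume := by
    have hind : Integrable (fun x => ψ x ^ 2 +
        Set.indicator (Set.Icc (-t) t) (fun _ => (1:ℝ)) x) volume :=
      hψsq.add ((integrable_indicator_iff measurableSet_Icc).2
        (integrableOn_const measure_Icc_lt_top.ne))
    apply Integrable.mono' hind hψm.aestronglyMeasurable
    apply ae_of_all
    intro x
    by_cases hx : x ∈ Set.Icc (-t) t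
    · rw [Set.indicator_of_mem hx, Real.norm_eq_abs]
      nlinarith [sq_nonneg (|ψ x| - 1), sq_abs (ψ x), abs_nonneg (ψ x)]
    · rw [Set.indicator_of_notMem hx, hsupp x hx]
      simp [sq_nonneg]
  have hxk : ∀ k : ℕ, Integrable (fun x => x ^ k * ψ x) volume := by
    intro k
    apply Integrable.mono' (hψint.abs.const_mul (t ^ k))
    · exact ((measurable_id.pow_const k).mul hψm).aestronglyMeasurable
    · apply ae_of_all
      intro x
      by_cases hx : x ∈ Set.Icc (-t) t
      · rw [Real.norm_eq_abs, abs_mul, abs_pow]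
        apply mul_le_mul_of_nonneg_right _ (abs_nonneg _)
        exact pow_le_pow_left₀ (abs_nonneg x) (abs_le.2 ⟨hx.1, hx.2⟩) k
      · rw [hsupp x hx]
        simp [mul_nonneg (pow_nonneg ht0.le k) (abs_nonneg _)]
  have hres : ∀ F : ℝ → ℝ, (∀ x, x ∉ Set.Icc (-t) t → F x = 0) →
      ∫ x in Set.Ioo (-t) t, F x = ∫ x, F x := by
    intro F hF
    calc ∫ x in Set.Ioo (-t) t, F x = ∫ x in Set.Icc (-t) t, F x :=
          (integral_Icc_eq_integral_Ioo).symm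
      _ = ∫ x, F x := setIntegral_eq_integral_of_forall_compl_eq_zero hF
  set c : ℕ → ℝ := fun k => ∫ x, x ^ k * ψ x with hcdef
  suffices hmain : ∀ n : ℕ, ∑ k ∈ Finset.range n, (1 / t ^ (2 * k)) * (c k) ^ 2 ≤
      t * Real.pi * C * ∫ x, g x ^ 2 * B x by
    have hterm0 : ∀ k : ℕ, 0 ≤ (1 / t ^ (2 * k)) * (∫ x, x ^ k * φ x * B x) ^ 2 := by
      intro k; positivity
    have hgoal : ∀ n : ℕ, ∑ k ∈ Finset.range n,
        (1 / t ^ (2 * k)) * (∫ x, x ^ k * φ x * B x) ^ 2 ≤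
        t * Real.pi * C * ∫ x, φ x ^ 2 * B x := by
      intro n
      rw [hIeq]
      calc ∑ k ∈ Finset.range n, (1 / t ^ (2 * k)) * (∫ x, x ^ k * φ x * B x) ^ 2
          = ∑ k ∈ Finset.range n, (1 / t ^ (2 * k)) * (c k) ^ 2 := by
            apply Finset.sum_congr rfl
            intro k _
            rw [hck k]
        _ ≤ _ := hmain n
    exact ⟨summable_of_sum_range_le hterm0 hgoal,
      Real.tsum_le_of_sum_range_le hterm0 hgoal⟩
  intro n
  set sI : Set ℝ := Set.Ioo (-t) t with hsIdef
  have hmsI : MeasurableSet sI := measurableSet_Ioo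
  set p : ℝ → ℝ := fun x => (Real.sqrt (t ^ 2 - x ^ 2))⁻¹ with hpdef
  have hppos : ∀ x ∈ sI, 0 < p x := by
    intro x hx
    have : 0 < t ^ 2 - x ^ 2 := by nlinarith [sq_lt_sq' hx.1 hx.2]
    exact inv_pos.2 (Real.sqrt_pos.2 this)
  have hpnonneg : ∀ x : ℝ, 0 ≤ p x := fun x => inv_nonneg.2 (Real.sqrt_nonneg _)
  have hpinv : ∀ x : ℝ, (p x)⁻¹ = Real.sqrt (t ^ 2 - x ^ 2) := fun x => inv_inv _
  set Kn : ℝ → ℝ → ℝ := fun x y => ∑ k ∈ Finset.range n, (x * y / t ^ 2) ^ k with hKdef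
  set jp : ℝ → ℝ := fun x => ∑ k ∈ Finset.range n, (x / t) ^ k * w k with hjpdef
  have ht2 : (0:ℝ) < t ^ 2 := by positivity
  have habs : ∀ x ∈ sI, |x| ≤ t := fun x hx => (abs_lt.2 ⟨hx.1, hx.2⟩).le
  have hrle : ∀ x ∈ sI, ∀ y ∈ sI, |x * y / t ^ 2| ≤ 1 := by
    intro x hx y hy
    rw [abs_div, abs_mul, abs_of_pos ht2, div_le_one ht2]
    calc |x| * |y| ≤ t * t := mul_le_mul (habs x hx) (habs y hy) (abs_nonneg y) ht0.le
      _ = t ^ 2 := (sq t).symm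
  have hKnn : ∀ x ∈ sI, ∀ y ∈ sI, 0 ≤ Kn x y := by
    intro x hx y hy
    obtain ⟨h1, h2⟩ := abs_le.1 (hrle x hx y hy)
    exact geom_nonneg h1 h2 n
  have hKsymm : ∀ x y : ℝ, Kn x y = Kn y x := by
    intro x y
    apply Finset.sum_congr rfl
    intro k _
    rw [mul_comm x y]
  have hmom : ∀ k : ℕ, ∫ y in sI, y ^ k * p y = t ^ k * w k := fun k => moment_cv ht0 k
  have hpow : ∀ x : ℝ, ∀ k : ℕ, (x / t ^ 2) ^ k * t ^ k = (x / t) ^ k := by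
    intro x k
    rw [← mul_pow]
    congr 1
    field_simp
  have hjp_meas : Measurable jp := by
    apply Finset.measurable_sum
    intro k _
    exact ((measurable_id.div_const t).pow_const k).mul_const (w k)
  have hjpbound : ∀ x ∈ sI, jp x ≤ π * (t * p x) := fun x hx => jpoly_bound ht0 hx n
  -- Kn * p integrable and evaluates to jp
  have hfactKp : ∀ x : ℝ, (fun y => Kn x y * p y) =
      fun y => ∑ k ∈ Finset.range n, (x / t ^ 2) ^ k * (y ^ k * p y) := by
    intro x
    funext y
    show (∑ k ∈ Finset.range n, (x * y / t ^ 2) ^ k) * p y = _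
    rw [Finset.sum_mul]
    apply Finset.sum_congr rfl
    intro k _
    ring
  have hKp_int : ∀ x : ℝ, IntegrableOn (fun y => Kn x y * p y) sI := by
    intro x
    rw [hfactKp x]
    exact integrable_finset_sum _ fun k _ => (yk_p_integrable ht0 k).const_mul _
  have hKp_eq : ∀ x : ℝ, (∫ y in sI, Kn x y * p y) = jp x := by
    intro x
    rw [hfactKp x, integral_finset_sum _ fun k _ => (yk_p_integrable ht0 k).const_mul _]
    apply Finset.sum_congr rfl
    intro k _
    rw [integral_const_mul, hmom k, ← mul_assoc, hpow x k]
  have hpK_eq : ∀ y : ℝ, (∫ x in sI, Kn x y * p x) = jp y := by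
    intro y
    have h1 : (fun x => Kn x y * p x) = fun x => Kn y x * p x := by
      funext x; rw [hKsymm x y]
    rw [h1]
    exact hKp_eq y
  have hjp_on : ∀ x ∈ sI, 0 ≤ jp x := by
    intro x hx
    rw [← hKp_eq x]
    exact setIntegral_nonneg hmsI fun y hy => mul_nonneg (hKnn x hx y hy) (hpnonneg y)
  -- second kernel piece
  have hq_int : ∀ k : ℕ, IntegrableOn (fun y => y ^ k * (ψ y ^ 2 * (p y)⁻¹)) sI := by
    intro k
    apply Integrable.mono' ((hψsq.integrableOn).const_mul (t ^ (k + 1)))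
    · exact ((measurable_id.pow_const k).mul
        ((hψm.pow_const 2).mul ((p_measurable (t := t)).inv))).aestronglyMeasurable
    · rw [ae_restrict_iff' hmsI]
      filter_upwards with y hy
      have hsle : Real.sqrt (t ^ 2 - y ^ 2) ≤ t := by
        calc Real.sqrt (t ^ 2 - y ^ 2) ≤ Real.sqrt (t ^ 2) :=
              Real.sqrt_le_sqrt (by nlinarith [sq_nonneg y])
          _ = t := Real.sqrt_sq ht0.le
      rw [Real.norm_eq_abs, abs_mul, abs_pow, abs_mul, abs_of_nonneg (sq_nonneg (ψ y)),
        hpinv y, abs_of_nonneg (Real.sqrt_nonneg (t ^ 2 - y ^ 2))]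
      calc |y| ^ k * (ψ y ^ 2 * Real.sqrt (t ^ 2 - y ^ 2))
          ≤ t ^ k * (ψ y ^ 2 * t) := by
            apply mul_le_mul (pow_le_pow_left₀ (abs_nonneg y) (habs y hy) k)
              (mul_le_mul_of_nonneg_left hsle (sq_nonneg _))
              (mul_nonneg (sq_nonneg _) (Real.sqrt_nonneg _)) (by positivity)
        _ = t ^ (k + 1) * ψ y ^ 2 := by rw [pow_succ]; ring
  set q : ℕ → ℝ := fun k => ∫ y in sI, y ^ k * (ψ y ^ 2 * (p y)⁻¹) with hqdef
  have hfactK2 : ∀ x : ℝ, (fun y => Kn x y * (ψ y ^ 2 * (p y)⁻¹)) =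
      fun y => ∑ k ∈ Finset.range n, (x / t ^ 2) ^ k * (y ^ k * (ψ y ^ 2 * (p y)⁻¹)) := by
    intro x
    funext y
    show (∑ k ∈ Finset.range n, (x * y / t ^ 2) ^ k) * _ = _
    rw [Finset.sum_mul]
    apply Finset.sum_congr rfl
    intro k _
    ring
  have hK2_int : ∀ x : ℝ, IntegrableOn (fun y => Kn x y * (ψ y ^ 2 * (p y)⁻¹)) sI := by
    intro x
    rw [hfactK2 x]
    exact integrable_finset_sum _ fun k _ => (hq_int k).const_mul _
  have hK2_eq : ∀ x : ℝ, (∫ y in sI, Kn x y * (ψ y ^ 2 * (p y)⁻¹)) =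
      ∑ k ∈ Finset.range n, (x / t ^ 2) ^ k * q k := by
    intro x
    rw [hfactK2 x, integral_finset_sum _ fun k _ => (hq_int k).const_mul _]
    exact Finset.sum_congr rfl fun k _ => integral_const_mul _ _
  -- the double integral identity
  have hfactK : ∀ x : ℝ, (fun y => Kn x y * (ψ x * ψ y)) =
      fun y => ∑ k ∈ Finset.range n, (x ^ k * ψ x / t ^ (2 * k)) * (y ^ k * ψ y) := by
    intro x
    funext y
    show (∑ k ∈ Finset.range n, (x * y / t ^ 2) ^ k) * _ = _
    rw [Finset.sum_mul]
    apply Finset.sum_congr rfl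
    intro k _
    rw [pow_mul]
    ring
  have hyint : ∀ (k : ℕ) (x : ℝ),
      IntegrableOn (fun y => (x ^ k * ψ x / t ^ (2 * k)) * (y ^ k * ψ y)) sI :=
    fun k x => ((hxk k).integrableOn).const_mul _
  have hdouble : ∀ x : ℝ, (∫ y in sI, Kn x y * (ψ x * ψ y)) =
      ∑ k ∈ Finset.range n, (x ^ k * ψ x / t ^ (2 * k)) * c k := by
    intro x
    rw [hfactK x, integral_finset_sum _ fun k _ => hyint k x]
    apply Finset.sum_congr rfl
    intro k _
    rw [integral_const_mul, hres _ (fun y hy => by rw [hsupp y hy, mul_zero])]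
  have hinner_int : ∀ x : ℝ, IntegrableOn (fun y => Kn x y * (ψ x * ψ y)) sI := by
    intro x
    rw [hfactK x]
    exact integrable_finset_sum _ fun k _ => hyint k x
  have hFk_int : ∀ k : ℕ, IntegrableOn (fun x => (x ^ k * ψ x / t ^ (2 * k)) * c k) sI :=
    fun k => (((hxk k).div_const _).mul_const _).integrableOn
  have hPn : ∑ k ∈ Finset.range n, (1 / t ^ (2 * k)) * c k ^ 2 =
      ∫ x in sI, ∫ y in sI, Kn x y * (ψ x * ψ y) := by
    have h1 : (fun x => ∫ y in sI, Kn x y * (ψ x * ψ y)) =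
        fun x => ∑ k ∈ Finset.range n, (x ^ k * ψ x / t ^ (2 * k)) * c k := funext hdouble
    rw [h1, integral_finset_sum _ fun k _ => hFk_int k]
    apply Finset.sum_congr rfl
    intro k _
    rw [integral_mul_const, integral_div, hres _ (fun x hx => by rw [hsupp x hx, mul_zero])]
    show 1 / t ^ (2 * k) * c k ^ 2 = c k / t ^ (2 * k) * c k
    ring
  -- pointwise AM-GM
  have hAM : ∀ x ∈ sI, ∀ y ∈ sI, Kn x y * (ψ x * ψ y) ≤
      Kn x y * ((ψ x ^ 2 * (p y / p x) + ψ y ^ 2 * (p x / p y)) / 2) := by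
    intro x hx y hy
    apply mul_le_mul_of_nonneg_left _ (hKnn x hx y hy)
    have hpx := hppos x hx
    have hpy := hppos y hy
    have key : (ψ x ^ 2 * (p y / p x) + ψ y ^ 2 * (p x / p y)) / 2 - ψ x * ψ y
        = (ψ x * p y - ψ y * p x) ^ 2 / (2 * p x * p y) := by
      field_simp
      ring
    have h0 : 0 ≤ (ψ x * p y - ψ y * p x) ^ 2 / (2 * p x * p y) := by positivity
    linarith [key ▸ h0]
  have hfact2 : ∀ x : ℝ,
      (fun y => Kn x y * ((ψ x ^ 2 * (p y / p x) + ψ y ^ 2 * (p x / p y)) / 2)) =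
      fun y => (ψ x ^ 2 / (2 * p x)) * (Kn x y * p y) +
        (p x / 2) * (Kn x y * (ψ y ^ 2 * (p y)⁻¹)) := by
    intro x
    funext y
    by_cases hpx : p x = 0
    · simp [hpx]
    · by_cases hpy : p y = 0
      · simp [hpy]
      · field_simp
  have hsplit : ∀ x : ℝ,
      (∫ y in sI, Kn x y * ((ψ x ^ 2 * (p y / p x) + ψ y ^ 2 * (p x / p y)) / 2)) =
      (ψ x ^ 2 / (2 * p x)) * jp x +
        (p x / 2) * ∫ y in sI, Kn x y * (ψ y ^ 2 * (p y)⁻¹) := by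
    intro x
    rw [hfact2 x, integral_add ((hKp_int x).const_mul _) ((hK2_int x).const_mul _),
      integral_const_mul, integral_const_mul, hKp_eq x]
  have hRHS2_int : ∀ x : ℝ, IntegrableOn
      (fun y => Kn x y * ((ψ x ^ 2 * (p y / p x) + ψ y ^ 2 * (p x / p y)) / 2)) sI := by
    intro x
    rw [hfact2 x]
    exact ((hKp_int x).const_mul _).add ((hK2_int x).const_mul _)
  -- integrability of outer pieces
  have hg1_pt : ∀ x ∈ sI, (ψ x ^ 2 / (2 * p x)) * jp x ≤ π * t / 2 * ψ x ^ 2 := by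
    intro x hx
    have hpx := hppos x hx
    calc (ψ x ^ 2 / (2 * p x)) * jp x ≤ (ψ x ^ 2 / (2 * p x)) * (π * (t * p x)) :=
          mul_le_mul_of_nonneg_left (hjpbound x hx) (by positivity)
      _ = π * t / 2 * ψ x ^ 2 := by field_simp
  have hg1_int : IntegrableOn (fun x => (ψ x ^ 2 / (2 * p x)) * jp x) sI := by
    apply Integrable.mono' ((hψsq.integrableOn).const_mul (π * t / 2))
    · exact (((hψm.pow_const 2).div ((p_measurable (t := t)).const_mul 2)).mul
        hjp_meas).aestronglyMeasurable
    · rw [ae_restrict_iff' hmsI]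
      filter_upwards with x hx
      have hnn : 0 ≤ (ψ x ^ 2 / (2 * p x)) * jp x :=
        mul_nonneg (by positivity) (hjp_on x hx)
      rw [Real.norm_eq_abs, abs_of_nonneg hnn]
      exact hg1_pt x hx
  have hQd : (0:ℝ) ≤ ∑ k ∈ Finset.range n, |q k| :=
    Finset.sum_nonneg fun k _ => abs_nonneg _
  have hg2_int : IntegrableOn
      (fun x => (p x / 2) * ∫ y in sI, Kn x y * (ψ y ^ 2 * (p y)⁻¹)) sI := by
    have hK2poly : (fun x => (p x / 2) * ∫ y in sI, Kn x y * (ψ y ^ 2 * (p y)⁻¹)) =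
        fun x => (p x / 2) * ∑ k ∈ Finset.range n, (x / t ^ 2) ^ k * q k := by
      funext x
      rw [hK2_eq x]
    rw [hK2poly]
    apply Integrable.mono'
      (((p_integrable ht0).const_mul ((∑ k ∈ Finset.range n, |q k|) / 2)))
    · apply Measurable.aestronglyMeasurable
      apply ((p_measurable (t := t)).div_const 2).mul
      apply Finset.measurable_sum
      intro k _
      exact ((measurable_id.div_const (t ^ 2)).pow_const k).mul_const (q k)
    · rw [ae_restrict_iff' hmsI]
      filter_upwards with x hx
      have hx1 : |x / t ^ 2| ≤ 1 := by
        rw [abs_div, abs_of_pos ht2, div_le_one ht2]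
        calc |x| ≤ t := habs x hx
          _ ≤ t ^ 2 := by nlinarith
      rw [Real.norm_eq_abs, abs_mul, abs_div, abs_of_nonneg (hpnonneg x), abs_of_pos two_pos]
      calc p x / 2 * |∑ k ∈ Finset.range n, (x / t ^ 2) ^ k * q k|
          ≤ p x / 2 * ∑ k ∈ Finset.range n, |q k| := by
            apply mul_le_mul_of_nonneg_left _ (by positivity)
            calc |∑ k ∈ Finset.range n, (x / t ^ 2) ^ k * q k|
                ≤ ∑ k ∈ Finset.range n, |(x / t ^ 2) ^ k * q k| :=
                  Finset.abs_sum_le_sum_abs _ _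
              _ ≤ ∑ k ∈ Finset.range n, |q k| := by
                  apply Finset.sum_le_sum
                  intro k _
                  rw [abs_mul, abs_pow]
                  calc |x / t ^ 2| ^ k * |q k| ≤ 1 * |q k| :=
                        mul_le_mul_of_nonneg_right
                          (pow_le_one₀ (abs_nonneg _) hx1) (abs_nonneg _)
                    _ = |q k| := one_mul _
        _ = (∑ k ∈ Finset.range n, |q k|) / 2 * p x := by ring
  -- step 1 : main double-integral bound
  have hstep1 : (∫ x in sI, ∫ y in sI, Kn x y * (ψ x * ψ y)) ≤
      ∫ x in sI, ((ψ x ^ 2 / (2 * p x)) * jp x +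
        (p x / 2) * ∫ y in sI, Kn x y * (ψ y ^ 2 * (p y)⁻¹)) := by
    apply setIntegral_mono_on
    · have h1 : (fun x => ∫ y in sI, Kn x y * (ψ x * ψ y)) =
          fun x => ∑ k ∈ Finset.range n, (x ^ k * ψ x / t ^ (2 * k)) * c k := funext hdouble
      rw [h1]
      exact integrable_finset_sum _ fun k _ => hFk_int k
    · exact hg1_int.add hg2_int
    · exact hmsI
    · intro x hx
      calc (∫ y in sI, Kn x y * (ψ x * ψ y))
          ≤ ∫ y in sI, Kn x y * ((ψ x ^ 2 * (p y / p x) + ψ y ^ 2 * (p x / p y)) / 2) :=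
            setIntegral_mono_on (hinner_int x) (hRHS2_int x) hmsI fun y hy => hAM x hx y hy
        _ = _ := hsplit x
  -- g1 term
  have hg1_le : (∫ x in sI, (ψ x ^ 2 / (2 * p x)) * jp x) ≤
      π * t / 2 * ∫ x in sI, ψ x ^ 2 := by
    rw [← integral_const_mul]
    exact setIntegral_mono_on hg1_int ((hψsq.integrableOn).const_mul _) hmsI hg1_pt
  -- g2 term via Fubini
  have hKm : Measurable fun z : ℝ × ℝ => Kn z.1 z.2 := by
    apply Finset.measurable_sum
    intro k _
    exact ((measurable_fst.mul measurable_snd).div_const (t ^ 2)).pow_const k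
  have hswap : (∫ x in sI, (p x / 2) * ∫ y in sI, Kn x y * (ψ y ^ 2 * (p y)⁻¹)) =
      ∫ y in sI, (ψ y ^ 2 * (p y)⁻¹ / 2) * jp y := by
    have h1 : (fun x => (p x / 2) * ∫ y in sI, Kn x y * (ψ y ^ 2 * (p y)⁻¹)) =
        fun x => ∫ y in sI, (p x / 2) * (Kn x y * (ψ y ^ 2 * (p y)⁻¹)) := by
      funext x
      rw [integral_const_mul]
    rw [h1]
    have hint : Integrable
        (Function.uncurry fun x y => (p x / 2) * (Kn x y * (ψ y ^ 2 * (p y)⁻¹)))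
        ((volume.restrict sI).prod (volume.restrict sI)) := by
      apply Integrable.mono' (Integrable.mul_prod (p_integrable ht0)
        ((hψsq.integrableOn).const_mul ((n : ℝ) * t / 2)))
      · apply Measurable.aestronglyMeasurable
        exact (((p_measurable (t := t)).comp measurable_fst).div_const 2).mul
          (hKm.mul (((hψm.comp measurable_snd).pow_const 2).mul
            (((p_measurable (t := t)).comp measurable_snd).inv)))
      · rw [Measure.prod_restrict, ae_restrict_iff' (hmsI.prod hmsI)]
        filter_upwards with z hz
        obtain ⟨hz1, hz2⟩ := hz
        have hKb : |Kn z.1 z.2| ≤ (n : ℝ) := abs_geom_le (hrle z.1 hz1 z.2 hz2) n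
        have hsle : (p z.2)⁻¹ ≤ t := by
          rw [hpinv]
          calc Real.sqrt (t ^ 2 - z.2 ^ 2) ≤ Real.sqrt (t ^ 2) :=
                Real.sqrt_le_sqrt (by nlinarith [sq_nonneg z.2])
            _ = t := Real.sqrt_sq ht0.le
        show ‖p z.1 / 2 * (Kn z.1 z.2 * (ψ z.2 ^ 2 * (p z.2)⁻¹))‖ ≤
          p z.1 * ((n : ℝ) * t / 2 * ψ z.2 ^ 2)
        rw [Real.norm_eq_abs, abs_mul, abs_mul, abs_mul,
          abs_div, abs_of_nonneg (hpnonneg z.1), abs_of_pos two_pos,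
          abs_of_nonneg (sq_nonneg (ψ z.2)), abs_of_nonneg (inv_nonneg.2 (hpnonneg z.2))]
        calc p z.1 / 2 * (|Kn z.1 z.2| * (ψ z.2 ^ 2 * (p z.2)⁻¹))
            ≤ p z.1 / 2 * ((n : ℝ) * (ψ z.2 ^ 2 * t)) := by
              apply mul_le_mul_of_nonneg_left _ (by positivity)
              apply mul_le_mul hKb
                (mul_le_mul_of_nonneg_left hsle (sq_nonneg _))
                (mul_nonneg (sq_nonneg _) (inv_nonneg.2 (hpnonneg z.2)))
                (Nat.cast_nonneg n)
          _ = p z.1 * ((n : ℝ) * t / 2 * ψ z.2 ^ 2) := by ring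
    rw [integral_integral_swap hint]
    apply integral_congr_ae
    apply ae_of_all
    intro y
    beta_reduce
    have h2 : (fun x => (p x / 2) * (Kn x y * (ψ y ^ 2 * (p y)⁻¹))) =
        fun x => (ψ y ^ 2 * (p y)⁻¹ / 2) * (Kn x y * p x) := by
      funext x
      ring
    rw [h2, integral_const_mul, hpK_eq y]
  have hg2fn_pt : ∀ y ∈ sI, (ψ y ^ 2 * (p y)⁻¹ / 2) * jp y ≤ π * t / 2 * ψ y ^ 2 := by
    intro y hy
    have hpy := hppos y hy
    calc (ψ y ^ 2 * (p y)⁻¹ / 2) * jp y ≤ (ψ y ^ 2 * (p y)⁻¹ / 2) * (π * (t * p y)) :=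
          mul_le_mul_of_nonneg_left (hjpbound y hy) (by positivity)
      _ = π * t / 2 * (ψ y ^ 2 * ((p y)⁻¹ * p y)) := by ring
      _ = π * t / 2 * ψ y ^ 2 := by rw [inv_mul_cancel₀ (ne_of_gt hpy), mul_one]
  have hg2fn_int : IntegrableOn (fun y => (ψ y ^ 2 * (p y)⁻¹ / 2) * jp y) sI := by
    apply Integrable.mono' ((hψsq.integrableOn).const_mul (π * t / 2))
    · exact (((hψm.pow_const 2).mul ((p_measurable (t := t)).inv)).div_const 2).mul
        hjp_meas |>.aestronglyMeasurable
    · rw [ae_restrict_iff' hmsI]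
      filter_upwards with y hy
      have hnn : 0 ≤ (ψ y ^ 2 * (p y)⁻¹ / 2) * jp y := by
        apply mul_nonneg _ (hjp_on y hy)
        have := inv_nonneg.2 (hpnonneg y)
        positivity
      rw [Real.norm_eq_abs, abs_of_nonneg hnn]
      exact hg2fn_pt y hy
  have hg2_le : (∫ y in sI, (ψ y ^ 2 * (p y)⁻¹ / 2) * jp y) ≤
      π * t / 2 * ∫ x in sI, ψ x ^ 2 := by
    rw [← integral_const_mul]
    exact setIntegral_mono_on hg2fn_int ((hψsq.integrableOn).const_mul _) hmsI hg2fn_pt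
  -- combine
  have hS : (∫ x in sI, ψ x ^ 2) ≤ C * ∫ x, g x ^ 2 * B x := by
    have h1 : (∫ x in sI, ψ x ^ 2) = ∫ x, ψ x ^ 2 :=
      hres _ fun x hx => by rw [hsupp x hx]; ring
    rw [h1, ← integral_const_mul]
    apply integral_mono_ae hψsq (hg2.const_mul C)
    filter_upwards [hC] with x hx
    show ψ x ^ 2 ≤ C * (g x ^ 2 * B x)
    have h2 : ψ x ^ 2 = (g x ^ 2 * B x) * B x := by show (g x * B x) ^ 2 = _; ring
    rw [h2]
    nlinarith [mul_nonneg (sq_nonneg (g x)) (hBnonneg x)]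
  have hSnn : 0 ≤ ∫ x in sI, ψ x ^ 2 := setIntegral_nonneg hmsI fun x _ => sq_nonneg _
  calc ∑ k ∈ Finset.range n, 1 / t ^ (2 * k) * c k ^ 2
      = ∫ x in sI, ∫ y in sI, Kn x y * (ψ x * ψ y) := hPn
    _ ≤ ∫ x in sI, ((ψ x ^ 2 / (2 * p x)) * jp x +
        (p x / 2) * ∫ y in sI, Kn x y * (ψ y ^ 2 * (p y)⁻¹)) := hstep1
    _ = (∫ x in sI, (ψ x ^ 2 / (2 * p x)) * jp x) +
        ∫ x in sI, (p x / 2) * ∫ y in sI, Kn x y * (ψ y ^ 2 * (p y)⁻¹) :=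
          integral_add hg1_int hg2_int
    _ ≤ π * t / 2 * (∫ x in sI, ψ x ^ 2) + π * t / 2 * (∫ x in sI, ψ x ^ 2) := by
        apply add_le_add hg1_le
        rw [hswap]
        exact hg2_le
    _ = π * t * ∫ x in sI, ψ x ^ 2 := by ring
    _ ≤ π * t * (C * ∫ x, g x ^ 2 * B x) := by
        apply mul_le_mul_of_nonneg_left hS (by positivity)
    _ = t * Real.pi * C * ∫ x, g x ^ 2 * B x := by ring
end

section
/- Let b, c ∈ ℂ satisfy |c| ≤ |b| < 1/4, and let A be the infinite matrix with entries A_{k,j} = binom(j,k) · c^k · b^{j−k} for 0 ≤ k ≤ j and A_{k,j} = 0 for k > j. Then ∑_{j=0}^∞ ∑_{k=0}^{j} binom(j,k)² · |c|^{2k} · |b|^{2(j−k)} < ∞; that is, the entries of A are square-summable, so A defines a Hilbert–Schmidt (in particular bounded) operator on ℓ², with trace(A*A) ≤ ∑_{j=0}^∞ |b|^{2j} binom(2j, j) < ∞. -/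
open Finset

lemma sum_choose_sq (j : ℕ) : ∑ k ∈ range (j + 1), (j.choose k) ^ 2 = (2 * j).choose j := by
  rw [two_mul, Nat.add_choose_eq, Finset.Nat.sum_antidiagonal_eq_sum_range_succ_mk]
  apply Finset.sum_congr rfl
  intro k hk
  rw [Nat.choose_symm (Nat.lt_succ_iff.mp (Finset.mem_range.mp hk)), sq]

lemma central_le_four_pow (j : ℕ) : (2 * j).choose j ≤ 4 ^ j := by
  calc (2 * j).choose j ≤ ∑ m ∈ range (2 * j + 1), (2 * j).choose m :=
        Finset.single_le_sum (f := fun m => (2 * j).choose m) (fun _ _ => Nat.zero_le _)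
          (Finset.mem_range.mpr (by omega))
    _ = 2 ^ (2 * j) := Nat.sum_range_choose _
    _ = 4 ^ j := by rw [pow_mul]; norm_num

/-- **Hilbert–Schmidt property of the affine encoding matrix.** If `|c| ≤ |b| < 1/4`,
the matrix `A` with entries `A_{k,j} = binom(j,k) c^k b^(j-k)` (for `k ≤ j`, zero
otherwise) has square-summable entries: the diagonal sums of `A*A` are summable, so
`A` is Hilbert–Schmidt, with trace `trace(A*A) ≤ ∑ⱼ |b|^{2j} binom(2j,j) < ∞`. -/
theorem affine_encoding_matrix_hilbertSchmidt (b c : ℂ)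
    (hcb : ‖c‖ ≤ ‖b‖) (hb : ‖b‖ < 1 / 4) :
    Summable (fun j : ℕ => ∑ k ∈ Finset.range (j + 1),
      (j.choose k : ℝ) ^ 2 * ‖c‖ ^ (2 * k) *
        ‖b‖ ^ (2 * (j - k))) ∧
    Summable (fun j : ℕ => ‖b‖ ^ (2 * j) * ((2 * j).choose j : ℝ)) ∧
    (∑' j : ℕ, ∑ k ∈ Finset.range (j + 1),
      (j.choose k : ℝ) ^ 2 * ‖c‖ ^ (2 * k) *
        ‖b‖ ^ (2 * (j - k))) ≤
      ∑' j : ℕ, ‖b‖ ^ (2 * j) * ((2 * j).choose j : ℝ) := by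
  set r := ‖b‖ with hr
  set s := ‖c‖ with hs
  have hr0 : 0 ≤ r := norm_nonneg b
  have hs0 : 0 ≤ s := norm_nonneg c
  -- pointwise bound: each summand ≤ r^(2j) * C(2j,j)
  have hle : ∀ j : ℕ, (∑ k ∈ Finset.range (j + 1),
      (j.choose k : ℝ) ^ 2 * s ^ (2 * k) * r ^ (2 * (j - k))) ≤
      r ^ (2 * j) * ((2 * j).choose j : ℝ) := by
    intro j
    have step : (∑ k ∈ Finset.range (j + 1),
        (j.choose k : ℝ) ^ 2 * s ^ (2 * k) * r ^ (2 * (j - k))) ≤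
        ∑ k ∈ Finset.range (j + 1), (j.choose k : ℝ) ^ 2 * r ^ (2 * j) := by
      apply Finset.sum_le_sum
      intro k hk
      have hkj : k ≤ j := Nat.lt_succ_iff.mp (Finset.mem_range.mp hk)
      have h1 : s ^ (2 * k) * r ^ (2 * (j - k)) ≤ r ^ (2 * k) * r ^ (2 * (j - k)) := by
        apply mul_le_mul_of_nonneg_right (pow_le_pow_left₀ hs0 hcb _) (pow_nonneg hr0 _)
      have h2 : r ^ (2 * k) * r ^ (2 * (j - k)) = r ^ (2 * j) := by
        rw [← pow_add]; congr 1; omega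
      calc (j.choose k : ℝ) ^ 2 * s ^ (2 * k) * r ^ (2 * (j - k))
          = (j.choose k : ℝ) ^ 2 * (s ^ (2 * k) * r ^ (2 * (j - k))) := by ring
        _ ≤ (j.choose k : ℝ) ^ 2 * (r ^ (2 * k) * r ^ (2 * (j - k))) := by
            apply mul_le_mul_of_nonneg_left h1 (by positivity)
        _ = (j.choose k : ℝ) ^ 2 * r ^ (2 * j) := by rw [h2]
    have heq : ∑ k ∈ Finset.range (j + 1), (j.choose k : ℝ) ^ 2 * r ^ (2 * j)
        = r ^ (2 * j) * ((2 * j).choose j : ℝ) := by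
      rw [← Finset.sum_mul]
      rw [mul_comm]
      congr 1
      push_cast [← sum_choose_sq j]
      ring
    linarith [step, heq.le, heq.ge]
  have hnonneg : ∀ j : ℕ, 0 ≤ ∑ k ∈ Finset.range (j + 1),
      (j.choose k : ℝ) ^ 2 * s ^ (2 * k) * r ^ (2 * (j - k)) := by
    intro j; apply Finset.sum_nonneg; intro k _; positivity
  -- summability of the majorant via geometric series
  have hgeom : Summable (fun j : ℕ => (4 * r ^ 2) ^ j) := by
    apply summable_geometric_of_lt_one (by positivity)
    nlinarith
  have hf : Summable (fun j : ℕ => r ^ (2 * j) * ((2 * j).choose j : ℝ)) := by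
    apply Summable.of_nonneg_of_le (fun j => by positivity) _ hgeom
    intro j
    calc r ^ (2 * j) * ((2 * j).choose j : ℝ) ≤ r ^ (2 * j) * (4 : ℝ) ^ j := by
          apply mul_le_mul_of_nonneg_left _ (by positivity)
          exact_mod_cast Nat.cast_le.mpr (central_le_four_pow j)
      _ = (4 * r ^ 2) ^ j := by rw [mul_pow, pow_mul, mul_comm]
  have hg : Summable (fun j : ℕ => ∑ k ∈ Finset.range (j + 1),
      (j.choose k : ℝ) ^ 2 * s ^ (2 * k) * r ^ (2 * (j - k))) :=
    Summable.of_nonneg_of_le hnonneg hle hf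
  exact ⟨hg, hf, Summable.tsum_le_tsum hle hg hf⟩
end

section
/- Let M be an infinite real Hankel matrix, given by a sequence m : ℕ → ℝ via M_{j,k} = m_{j+k}, which is positive definite (∑_{i,j} c_i m_{i+j} c_j > 0 for every nonzero finitely supported real sequence c) and normalized so that m_0 = 1. Then there exist real sequences (a_n)_{n∈ℕ} and (b_n)_{n∈ℕ} such that, defining the tridiagonal (Jacobi) action on finitely supported sequences v : ℕ → ℝ by (T v)_n = a_{n−1} v_{n−1} + b_n v_n + a_n v_{n+1} (with the convention a_{−1} v_{−1} = 0), one has M_{j,k} = (T^{j+k} δ₀)(0) for all j, k ∈ ℕ, where δ₀ is the sequence (1, 0, 0, …). That is, every normalized positive definite Hankel matrix is of T-class with T a banded symmetric tridiagonal matrix. -/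
open Polynomial

noncomputable def momL (m : ℕ → ℝ) : ℝ[X] →ₗ[ℝ] ℝ where
  toFun p := p.sum fun n c => c * m n
  map_add' p q := Polynomial.sum_add_index p q _ (fun i => by simp) (fun a b c => by ring)
  map_smul' r p := by
    show (r • p).sum (fun n c => c * m n) = r • p.sum fun n c => c * m n
    rw [Polynomial.sum_smul_index p r _ (fun i => by simp), Polynomial.smul_sum]
    simp only [smul_eq_mul]
    rw [Polynomial.sum_def, Polynomial.sum_def]; exact Finset.sum_congr rfl (fun n _ => by ring)

theorem momL_monomial (m : ℕ → ℝ) (n : ℕ) (c : ℝ) : momL m (monomial n c) = c * m n := by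
  show (monomial n c).sum (fun n c => c * m n) = c * m n
  exact Polynomial.sum_monomial_index c _ (by simp)

theorem momL_X_pow (m : ℕ → ℝ) (n : ℕ) : momL m ((X : ℝ[X]) ^ n) = m n := by
  rw [X_pow_eq_monomial, momL_monomial, one_mul]

theorem momL_mul (m : ℕ → ℝ) (p q : ℝ[X]) :
    momL m (p * q) = ∑ i ∈ p.support, ∑ j ∈ q.support,
      p.coeff i * m (i + j) * q.coeff j := by
  rw [Polynomial.mul_eq_sum_sum, map_sum]
  refine Finset.sum_congr rfl fun i _ => ?_
  rw [Polynomial.sum_def, map_sum]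
  refine Finset.sum_congr rfl fun j _ => ?_
  rw [momL_monomial]; ring


open RealInnerProductSpace

section Key
variable {E : Type*} [NormedAddCommGroup E] [InnerProductSpace ℝ E]

theorem orth_span_zero (e : ℕ → E) (he : Orthonormal ℝ e) (s : Set ℕ) (v : E)
    (hv : v ∈ Submodule.span ℝ (e '' s)) (k : ℕ) (hk : k ∉ s) : ⟪v, e k⟫ = 0 := by
  induction hv using Submodule.span_induction with
  | mem x hx =>
      obtain ⟨i, hi, rfl⟩ := hx
      exact he.2 (fun h => hk (h ▸ hi))
  | zero => simp
  | add x y _ _ hx hy => rw [inner_add_left, hx, hy, add_zero]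
  | smul r x _ hx => rw [real_inner_smul_left, hx, mul_zero]

theorem orth_span_eq_zero (e : ℕ → E) (s : Set ℕ) (v : E)
    (hv : v ∈ Submodule.span ℝ (e '' s)) (h0 : ∀ k ∈ s, ⟪v, e k⟫ = 0) : v = 0 := by
  have hvv : ∀ w ∈ Submodule.span ℝ (e '' s), ⟪v, w⟫ = 0 := by
    intro w hw
    induction hw using Submodule.span_induction with
    | mem x hx => obtain ⟨i, hi, rfl⟩ := hx; exact h0 i hi
    | zero => simp
    | add x y _ _ hx hy => rw [inner_add_right, hx, hy, add_zero]
    | smul r x _ hx => rw [real_inner_smul_right, hx, mul_zero]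
  exact inner_self_eq_zero.mp (hvv v hv)

variable (A : E →ₗ[ℝ] E) (hsym : ∀ u v : E, ⟪A u, v⟫ = ⟪u, A v⟫)
  (e : ℕ → E) (he : Orthonormal ℝ e)
  (hA : ∀ n : ℕ, A (e n) ∈ Submodule.span ℝ (e '' Set.Iic (n + 1)))

include hsym he hA

theorem three_term (n : ℕ) :
    A (e n) = (if n = 0 then (0 : E) else ⟪A (e (n - 1)), e n⟫ • e (n - 1)) +
      ⟪A (e n), e n⟫ • e n + ⟪A (e n), e (n + 1)⟫ • e (n + 1) := by
  have hir : ∀ i j, ⟪e i, e j⟫ = if i = j then (1 : ℝ) else 0 := orthonormal_iff_ite.mp he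
  have hC1 : ∀ a b : ℕ, a + 1 < b → ⟪A (e a), e b⟫ = 0 := fun a b hab =>
    orth_span_zero e he _ _ (hA a) b (by simp only [Set.mem_Iic]; omega)
  have hC1' : ∀ a b : ℕ, b + 1 < a → ⟪A (e a), e b⟫ = 0 := by
    intro a b hab
    rw [hsym, real_inner_comm]
    exact hC1 b a hab
  set w : E := (if n = 0 then (0 : E) else ⟪A (e (n - 1)), e n⟫ • e (n - 1)) +
      ⟪A (e n), e n⟫ • e n + ⟪A (e n), e (n + 1)⟫ • e (n + 1) with hw
  have hwmem : w ∈ Submodule.span ℝ (e '' Set.Iic (n + 1)) := by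
    have hmem : ∀ k ≤ n + 1, e k ∈ Submodule.span ℝ (e '' Set.Iic (n + 1)) := fun k hk =>
      Submodule.subset_span ⟨k, hk, rfl⟩
    refine Submodule.add_mem _ (Submodule.add_mem _ ?_ ?_) ?_
    · split_ifs
      · exact Submodule.zero_mem _
      · exact Submodule.smul_mem _ _ (hmem _ (by omega))
    · exact Submodule.smul_mem _ _ (hmem _ (by omega))
    · exact Submodule.smul_mem _ _ (hmem _ le_rfl)
  have hsub : A (e n) - w = 0 := by
    refine orth_span_eq_zero e _ _ (Submodule.sub_mem _ (hA n) hwmem) ?_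
    intro k hk
    simp only [Set.mem_Iic] at hk
    rw [inner_sub_left, sub_eq_zero, hw]
    by_cases hn : n = 0
    · subst hn
      interval_cases k <;>
        simp [inner_add_left, real_inner_smul_left, hir, he.1]
    · rw [if_neg hn]
      simp only [inner_add_left, real_inner_smul_left, hir]
      rcases Nat.lt_or_ge (k + 1) n with h | h
      · have h2 : n - 1 ≠ k := by omega
        have h3 : n ≠ k := by omega
        have h4 : n + 1 ≠ k := by omega
        rw [hC1' n k h]
        simp [h2, h3, h4]
      rcases Nat.lt_trichotomy k n with h2 | h2 | h2
      · have hk1 : n - 1 = k := by omega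
        have h3 : n ≠ k := by omega
        have h4 : n + 1 ≠ k := by omega
        rw [hsym, real_inner_comm]
        simp only [if_pos hk1, if_neg h3, if_neg h4, mul_one, mul_zero, add_zero]
        rw [← hk1]
      · have h2' : n - 1 ≠ k := by omega
        have h4 : n + 1 ≠ k := by omega
        simp [h2, h2', h4, show n - 1 ≠ n by omega]
      · have hk1 : n + 1 = k := by omega
        have h2' : n - 1 ≠ k := by omega
        have h3 : n ≠ k := by omega
        simp only [if_pos hk1, if_neg h3, if_neg h2', mul_one, mul_zero, add_zero,
          zero_add]
        rw [← hk1]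
  have := sub_eq_zero.mp hsub
  rw [this, hw]

theorem tclass_key : ∀ N n : ℕ, ⟪(A ^ N) (e 0), e n⟫ =
    ((fun v : ℕ → ℝ => fun n : ℕ =>
        (if n = 0 then 0 else ⟪A (e (n - 1)), e n⟫ * v (n - 1)) +
          ⟪A (e n), e n⟫ * v n + ⟪A (e n), e (n + 1)⟫ * v (n + 1))^[N]
      (fun n : ℕ => if n = 0 then (1 : ℝ) else 0)) n := by
  have hir : ∀ i j, ⟪e i, e j⟫ = if i = j then (1 : ℝ) else 0 := orthonormal_iff_ite.mp he
  intro N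
  induction N with
  | zero =>
      intro n
      simp only [pow_zero, Module.End.one_apply, Function.iterate_zero, id_eq]
      rcases eq_or_ne n 0 with h | h
      · subst h; simp [hir, he.1]
      · simp [hir, h, (Ne.symm h : (0:ℕ) ≠ n)]
  | succ N ih =>
      intro n
      have hpow : (A ^ (N + 1)) (e 0) = A ((A ^ N) (e 0)) := by
        rw [pow_succ', Module.End.mul_apply]
      have hexp : ⟪(A ^ N) (e 0), A (e n)⟫ =
          (if n = 0 then 0 else ⟪A (e (n - 1)), e n⟫ * ⟪(A ^ N) (e 0), e (n - 1)⟫) +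
            ⟪A (e n), e n⟫ * ⟪(A ^ N) (e 0), e n⟫ +
            ⟪A (e n), e (n + 1)⟫ * ⟪(A ^ N) (e 0), e (n + 1)⟫ := by
        conv_lhs => rw [three_term A hsym e he hA n]
        rw [inner_add_right, inner_add_right, real_inner_smul_right, real_inner_smul_right]
        rcases eq_or_ne n 0 with h | h
        · rw [if_pos h, if_pos h, inner_zero_right]
        · rw [if_neg h, if_neg h, real_inner_smul_right]
      rw [hpow, Function.iterate_succ_apply', hsym, hexp, ih n, ih (n + 1)]
      rcases eq_or_ne n 0 with h | h
      · rw [if_pos h, if_pos h]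
      · rw [if_neg h, if_neg h, ih (n - 1)]
end Key


open Polynomial Submodule in
/-- **Every normalized positive definite Hankel matrix is of `T`-class with `T` a
symmetric tridiagonal (Jacobi) matrix.** There exist real sequences `a`, `b` such
that, for the tridiagonal action `(Tv)_n = a_{n-1} v_{n-1} + b_n v_n + a_n v_{n+1}`
(with the convention `a_{-1} v_{-1} = 0`), one has
`M_{j,k} = m (j+k) = (T^{j+k} δ₀)(0)` for all `j, k`. -/
theorem hankel_is_T_class (m : ℕ → ℝ) (hm0 : m 0 = 1)
    (hpd : ∀ c : ℕ →₀ ℝ, c ≠ 0 →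
      0 < ∑ i ∈ c.support, ∑ j ∈ c.support, c i * m (i + j) * c j) :
    ∃ a b : ℕ → ℝ,
      ∀ j k : ℕ,
        m (j + k) =
        ((fun v : ℕ → ℝ => fun n : ℕ =>
            (if n = 0 then 0 else a (n - 1) * v (n - 1)) + b n * v n +
              a n * v (n + 1))^[j + k]
          (fun n : ℕ => if n = 0 then (1 : ℝ) else 0)) 0 := by
  classical
  have hpos : ∀ p : ℝ[X], p ≠ 0 → 0 < momL m (p * p) := by
    intro p hp
    rw [momL_mul]
    have hc : p.toFinsupp.coeff ≠ 0 := by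
      intro h
      apply hp; ext i; rw [← Polynomial.toFinsupp_apply, h]; simp
    exact hpd p.toFinsupp.coeff hc
  let core : InnerProductSpace.Core ℝ ℝ[X] :=
    { inner := fun p q => momL m (p * q)
      conj_inner_symm := fun p q => by
        simpa using congrArg (momL m) (mul_comm q p)
      re_inner_nonneg := fun p => by
        rcases eq_or_ne p 0 with h | h
        · simp [h]
        · simpa using (hpos p h).le
      definite := fun p hp => by
        by_contra h
        exact (hpos p h).ne' (by simpa using hp)
      add_left := fun x y z => by
        show momL m ((x + y) * z) = momL m (x * z) + momL m (y * z)
        rw [add_mul, map_add]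
      smul_left := fun x y r => by
        show momL m ((r • x) * y) = (starRingEnd ℝ) r * momL m (x * y)
        rw [smul_mul_assoc, map_smul]
        simp }
  letI : NormedAddCommGroup ℝ[X] := core.toNormedAddCommGroup
  letI : InnerProductSpace ℝ ℝ[X] := InnerProductSpace.ofCore core.toCore
  have hinner : ∀ p q : ℝ[X], ⟪p, q⟫ = momL m (p * q) := fun _ _ => rfl
  set f : ℕ → ℝ[X] := fun n => (X : ℝ[X]) ^ n with hf
  have hLI : LinearIndependent ℝ f := by
    have h := (Polynomial.basisMonomials ℝ).linearIndependent
    have : f = ⇑(Polynomial.basisMonomials ℝ) := by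
      rw [Polynomial.coe_basisMonomials]
      funext n
      exact X_pow_eq_monomial n
    rwa [this]
  set e : ℕ → ℝ[X] := InnerProductSpace.gramSchmidtNormed ℝ f with he_def
  have he : Orthonormal ℝ e := InnerProductSpace.gramSchmidtNormed_orthonormal hLI
  have hsp : ∀ n : ℕ, span ℝ (e '' Set.Iic n) = span ℝ (f '' Set.Iic n) := fun n => by
    rw [he_def, InnerProductSpace.span_gramSchmidtNormed, InnerProductSpace.span_gramSchmidt_Iic]
  have he0 : e 0 = 1 := by
    have h1 : InnerProductSpace.gramSchmidt ℝ f 0 = 1 := by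
      have h := InnerProductSpace.gramSchmidt_bot (𝕜 := ℝ) f
      simpa [hf] using h
    have hi1 : ⟪(1 : ℝ[X]), 1⟫ = 1 := by
      rw [hinner, mul_one, ← pow_zero (X : ℝ[X]), momL_X_pow, hm0]
    have hnorm : ‖(1 : ℝ[X])‖ = 1 := by
      have h2 := real_inner_self_eq_norm_mul_norm (1 : ℝ[X])
      rw [hi1] at h2
      nlinarith [norm_nonneg (1 : ℝ[X])]
    rw [he_def, InnerProductSpace.gramSchmidtNormed, h1, hnorm]
    simp
  set A : ℝ[X] →ₗ[ℝ] ℝ[X] := LinearMap.mulLeft ℝ (X : ℝ[X]) with hA_def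
  have hsym : ∀ u v : ℝ[X], ⟪A u, v⟫ = ⟪u, A v⟫ := by
    intro u v
    rw [hinner, hinner, hA_def, LinearMap.mulLeft_apply, LinearMap.mulLeft_apply]
    exact congrArg (momL m) (by ring)
  have hA : ∀ n : ℕ, A (e n) ∈ span ℝ (e '' Set.Iic (n + 1)) := by
    intro n
    rw [hsp]
    have h1 : e n ∈ span ℝ (f '' Set.Iic n) := by
      rw [← hsp]
      exact subset_span ⟨n, Set.mem_Iic.mpr le_rfl, rfl⟩
    have h2 : A (e n) ∈ span ℝ (A '' (f '' Set.Iic n)) :=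
      Submodule.apply_mem_span_image_of_mem_span A h1
    refine span_le.mpr ?_ h2
    rintro - ⟨-, ⟨k, hk, rfl⟩, rfl⟩
    refine subset_span ⟨k + 1, by simpa using Nat.succ_le_succ hk, ?_⟩
    rw [hA_def, LinearMap.mulLeft_apply]
    show (X : ℝ[X]) ^ (k + 1) = X * X ^ k
    exact pow_succ' (X : ℝ[X]) k
  have hA0 : ∀ N : ℕ, (A ^ N) (e 0) = (X : ℝ[X]) ^ N := by
    intro N
    induction N with
    | zero => simpa using he0
    | succ N ih =>
        rw [pow_succ', Module.End.mul_apply, ih, hA_def, LinearMap.mulLeft_apply,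
          pow_succ']
  refine ⟨fun n => ⟪A (e n), e (n + 1)⟫, fun n => ⟪A (e n), e n⟫, ?_⟩
  intro j k
  have hk := tclass_key A hsym e he hA (j + k) 0
  have hfe : (fun v : ℕ → ℝ => fun n : ℕ =>
      (if n = 0 then 0 else
        (fun n => ⟪A (e n), e (n + 1)⟫) (n - 1) * v (n - 1)) +
        (fun n => ⟪A (e n), e n⟫) n * v n +
        (fun n => ⟪A (e n), e (n + 1)⟫) n * v (n + 1)) =
      (fun v : ℕ → ℝ => fun n : ℕ =>
      (if n = 0 then 0 else ⟪A (e (n - 1)), e n⟫ * v (n - 1)) +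
        ⟪A (e n), e n⟫ * v n + ⟪A (e n), e (n + 1)⟫ * v (n + 1)) := by
    funext v n
    rcases eq_or_ne n 0 with h | h
    · rw [if_pos h, if_pos h]
    · have h1 : n - 1 + 1 = n := by omega
      rw [if_neg h, if_neg h]
      simp only [h1]
  rw [hfe, ← hk, hA0, he0, hinner, mul_one, momL_X_pow]
end
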